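/- arXiv:2506.04670 — 6 statements merged into one kernel-verified Lean document; each statement's English description precedes it below -/
import Mathlib

section
/- Let q ≥ 3 be a prime power. Then the graph 𝒜𝒢(2,q) has girth 6, i.e., the shortest cycle in 𝒜𝒢(2,q) has length 6. -/
open SimpleGraph

/-- Vertices of `𝒜𝒢(2,q)`: points `(x, y)` (left) and lines `[m, k]` (right). -/
abbrev AGVertex (F : Type*) := (F × F) ⊕ (F × F)

/-- The point `(x, y)` lies on the line `[m, k]`: if `m ≠ 0` this means
`m * x + y = k`, and `[0, k] = {(k, y) : y ∈ F}`. -/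
def AGOnLine (F : Type*) [Field F] (p l : F × F) : Prop :=
  (l.1 = 0 ∧ p.1 = l.2) ∨ (l.1 ≠ 0 ∧ l.1 * p.1 + p.2 = l.2)

/-- Adjacency for `𝒜𝒢(2,q)`: a point is adjacent to the lines through it. -/
def AGAdj (F : Type*) [Field F] : AGVertex F → AGVertex F → Prop
  | .inl p, .inr l => AGOnLine F p l
  | .inr l, .inl p => AGOnLine F p l
  | _, _ => False

/-- The graph `𝒜𝒢(2,q)` (`AG(2,q)` minus a parallel class): the bipartite incidence
graph of the points and the lines `[m,k]` of the affine plane over `F`. -/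
def AGGraph (F : Type*) [Field F] : SimpleGraph (AGVertex F) where
  Adj := AGAdj F
  symm := ⟨by rintro (p | l) (q | m) h <;> simp only [AGAdj] at h ⊢ <;> exact h⟩
  loopless := ⟨by rintro (p | l) h <;> simp only [AGAdj] at h⟩

/-- The map `τ_{a,b,c,d}` on the vertices of `𝒜𝒢(2,q)`. -/
def AGtau (F : Type*) [Field F] (a b c d : F) : AGVertex F → AGVertex F
  | .inl (x, y) => .inl (a * x + b, c * y + d)
  | .inr (m, k) => .inr (a⁻¹ * m * c, a⁻¹ * m * b * c + c * k + d)

/-- The map `α` on the vertices of `𝒜𝒢(2,q)`. -/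
def AGalpha (F : Type*) [Field F] : AGVertex F → AGVertex F
  | .inl (x, y) => .inr (-x, -y)
  | .inr (m, k) => .inl (-m, -k)

/-- The generating set for the group `G = ⟨τ_{a,b,c,d}, α⟩`: those permutations of the
vertex set that act as some `τ_{a,b,c,d}` (with `a, c ≠ 0`) or as `α`. -/
def AGGens (F : Type*) [Field F] : Set (Equiv.Perm (AGVertex F)) :=
  {f | (∃ a b c d : F, a ≠ 0 ∧ c ≠ 0 ∧ ∀ v, f v = AGtau F a b c d v) ∨
    ∀ v, f v = AGalpha F v}

/-- Two points on two common lines: the points or the lines coincide. -/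
lemma AG_unique {F : Type*} [Field F] {p p' l l' : F × F}
    (h1 : AGOnLine F p l) (h2 : AGOnLine F p l') (h3 : AGOnLine F p' l) (h4 : AGOnLine F p' l') :
    p = p' ∨ l = l' := by
  rcases h1 with ⟨hm, h1⟩ | ⟨hm, h1⟩ <;> rcases h2 with ⟨hm', h2⟩ | ⟨hm', h2⟩ <;>
    rcases h3 with ⟨_, h3⟩ | ⟨hm2, h3⟩ <;> rcases h4 with ⟨_, h4⟩ | ⟨hm2', h4⟩ <;>
    first
      | (exact absurd hm (by assumption))
      | (exact absurd hm' (by assumption))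
      | (exact absurd ‹l.1 = 0› hm)
      | (exact absurd ‹l'.1 = 0› hm')
      | skip
  · exact Or.inr (Prod.ext (hm.trans ‹l'.1 = 0›.symm) (h1.symm.trans h2))
  · refine Or.inl (Prod.ext (h1.trans h3.symm) ?_)
    have hx : p.1 = p'.1 := h1.trans h3.symm
    have := h2.trans h4.symm
    rw [hx] at this
    exact add_left_cancel this
  · refine Or.inl (Prod.ext (h2.trans h4.symm) ?_)
    have hx : p.1 = p'.1 := h2.trans h4.symm
    have := h1.trans h3.symm
    rw [hx] at this
    exact add_left_cancel this
  · by_cases hmm : l.1 = l'.1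
    · right
      refine Prod.ext hmm ?_
      rw [← h1, ← h2, hmm]
    · left
      have hx : p.1 = p'.1 := by
        have e1 : (l.1 - l'.1) * p.1 = l.2 - l'.2 := by linear_combination h1 - h2
        have e2 : (l.1 - l'.1) * p'.1 = l.2 - l'.2 := by linear_combination h3 - h4
        exact mul_left_cancel₀ (sub_ne_zero.mpr hmm) (e1.trans e2.symm)
      have := h1.trans h3.symm
      rw [hx] at this
      exact Prod.ext hx (add_left_cancel this)

lemma AG_adj_side {F : Type*} [Field F] {u v : AGVertex F} (h : (AGGraph F).Adj u v) :
    u.isLeft = !v.isLeft := by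
  rcases u with p | l <;> rcases v with p' | l' <;> simp_all [AGGraph, AGAdj]

/-- Walks in the bipartite graph have length of parity determined by endpoints. -/
lemma AG_walk_parity {F : Type*} [Field F] {u v : AGVertex F} (w : (AGGraph F).Walk u v) :
    Even w.length ↔ u.isLeft = v.isLeft := by
  induction w with
  | nil => simp
  | @cons a b c h p ih =>
    have hside := AG_adj_side h
    rw [Walk.length_cons, Nat.even_add_one, ih, hside]
    cases hb : Sum.isLeft b <;> cases hcc : Sum.isLeft c <;> simp_all

lemma AG_no_four_cycle {F : Type*} [Field F] (a : AGVertex F)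
    (w : (AGGraph F).Walk a a) (hc : w.IsCycle) : w.length ≠ 4 := by
  intro hlen
  obtain _ | ⟨h1, w⟩ := w
  · simp at hlen
  obtain _ | ⟨h2, w⟩ := w
  · simp at hlen
  obtain _ | ⟨h3, w⟩ := w
  · simp at hlen
  obtain _ | ⟨h4, w⟩ := w
  · simp at hlen
  obtain _ | ⟨h5, w⟩ := w
  case cons.cons.cons.cons.cons => simp at hlen
  -- vertices a, b, c, d with edges a-b, b-c, c-d, d-a
  rename_i b c d
  have hnodup : a ≠ c ∧ b ≠ d := by
    rw [Walk.isCycle_def] at hc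
    have := hc.2.2
    simp only [Walk.support_cons, Walk.support_nil, List.tail_cons, List.nodup_cons,
      List.mem_cons, List.not_mem_nil] at this
    tauto
  rcases a with pa | la <;> rcases b with pb | lb <;> rcases c with pc | lc <;>
    rcases d with pd | ld <;>
    simp only [AGGraph, AGAdj] at h1 h2 h3 h4 <;> try exact h1.elim
  · -- points pa, pc; lines lb, ld
    rcases AG_unique h1 h4 h2 h3 with h | h
    · exact hnodup.1 (by rw [h])
    · exact hnodup.2 (by rw [h])
  · -- lines la, lc; points pb, pd
    rcases AG_unique h1 h2 h4 h3 with h | h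
    · exact hnodup.2 (by rw [h])
    · exact hnodup.1 (by rw [h])

/-- For a prime power `q ≥ 3`, the graph `𝒜𝒢(2,q)` has girth `6`. -/
theorem AG_girth_eq_six (q : ℕ) (hq : IsPrimePow q) (hq3 : 3 ≤ q)
    (F : Type*) [Field F] [Fintype F] (hF : Fintype.card F = q) :
    (AGGraph F).girth = 6 := by
  classical
  -- pick t ∉ {0, 1}
  obtain ⟨t, ht0, ht1⟩ : ∃ t : F, t ≠ 0 ∧ t ≠ 1 := by
    by_contra h
    push_neg at h
    have hsub : (Finset.univ : Finset F) ⊆ {0, 1} := by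
      intro x _
      simp only [Finset.mem_insert, Finset.mem_singleton]
      by_cases hx : x = 0
      · exact Or.inl hx
      · exact Or.inr (h x hx)
    have := Finset.card_le_card hsub
    have h2 : ({0, 1} : Finset F).card ≤ 2 :=
      le_trans (Finset.card_insert_le _ _) (by simp)
    rw [Finset.card_univ, hF] at this
    omega
  -- the explicit 6-cycle
  have a01 : (AGGraph F).Adj (.inl (0, 0)) (.inr (0, 0)) := by
    simp [AGGraph, AGAdj, AGOnLine]
  have a12 : (AGGraph F).Adj (.inr (0, 0)) (.inl ((0 : F), 1)) := by
    simp [AGGraph, AGAdj, AGOnLine]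
  have a23 : (AGGraph F).Adj (.inl ((0 : F), 1)) (.inr (1 - t, 1)) := by
    simp only [AGGraph, AGAdj, AGOnLine]
    right
    constructor
    · exact sub_ne_zero.mpr (Ne.symm ht1)
    · ring
  have a34 : (AGGraph F).Adj (.inr (1 - t, 1)) (.inl ((1 : F), t)) := by
    simp only [AGGraph, AGAdj, AGOnLine]
    right
    constructor
    · exact sub_ne_zero.mpr (Ne.symm ht1)
    · ring
  have a45 : (AGGraph F).Adj (.inl ((1 : F), t)) (.inr (-t, 0)) := by
    simp only [AGGraph, AGAdj, AGOnLine]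
    right
    constructor
    · exact neg_ne_zero.mpr ht0
    · ring
  have a50 : (AGGraph F).Adj (.inr (-t, (0 : F))) (.inl (0, 0)) := by
    simp only [AGGraph, AGAdj, AGOnLine]
    right
    constructor
    · exact neg_ne_zero.mpr ht0
    · ring
  set w : (AGGraph F).Walk (.inl (0, 0)) (.inl (0, 0)) :=
    .cons a01 (.cons a12 (.cons a23 (.cons a34 (.cons a45 (.cons a50 .nil)))))
    with hw
  have hlen : w.length = 6 := by simp [hw]
  have e1 : (1 : F) - t ≠ 0 := sub_ne_zero.mpr (Ne.symm ht1)
  have e2 : (-t : F) ≠ 0 := neg_ne_zero.mpr ht0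
  have e3 : (1 : F) - t ≠ -t := by
    intro h
    apply one_ne_zero (α := F)
    linear_combination h
  have e4 : (0 : F) ≠ 1 := zero_ne_one
  have hcyc : w.IsCycle := by
    rw [Walk.isCycle_def]
    refine ⟨⟨?_⟩, by simp [hw], ?_⟩
    · simp only [hw, Walk.edges_cons, Walk.edges_nil, List.nodup_cons, List.mem_cons,
        List.not_mem_nil, or_false, List.nodup_nil, and_true, Sym2.eq, Sym2.rel_iff',
        Prod.mk.injEq, Sum.inl.injEq, Sum.inr.injEq, Prod.swap_prod_mk]
      refine ⟨?_, ?_, ?_, ?_, ?_⟩ <;> push_neg <;>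
        simp_all [Prod.ext_iff, eq_comm] <;> tauto
    · simp only [hw, Walk.support_cons, Walk.support_nil, List.tail_cons, List.nodup_cons,
        List.mem_cons, List.not_mem_nil, or_false, List.nodup_nil, and_true]
      refine ⟨?_, ?_, ?_, ?_, ?_⟩ <;> push_neg <;>
        simp_all [Prod.ext_iff, eq_comm] <;> tauto
  -- egirth bounds
  have hub : (AGGraph F).egirth ≤ 6 := by
    have h1 : (AGGraph F).egirth ≤ (w.length : ℕ∞) := by
      rw [egirth]
      exact iInf_le_of_le _ (iInf_le_of_le w (iInf_le _ hcyc))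
    simpa [hlen] using h1
  have hlb : (6 : ℕ∞) ≤ (AGGraph F).egirth := by
    rw [le_egirth]
    intro a c hc
    have h3 : 3 ≤ c.length := hc.three_le_length
    have h4 : c.length ≠ 4 := AG_no_four_cycle a c hc
    have heven : Even c.length := by rw [AG_walk_parity]
    obtain ⟨k, hk⟩ := heven
    have : 6 ≤ c.length := by omega
    exact_mod_cast this
  have : (AGGraph F).egirth = 6 := le_antisymm hub hlb
  rw [girth, this]
  rfl
end

section
/- Let q ≥ 3 be a prime power. Then 𝒜𝒢(2,q) is distance-regular with intersection array {q, q−1, q−1, 1; 1, 1, q−1, q}: for all vertices u, v of 𝒜𝒢(2,q) with d(u,v) = i (0 ≤ i ≤ 4), the number of neighbors w of v with d(u,w) = i+1 equals b_i and the number of neighbors w of v with d(u,w) = i−1 equals c_i, where (b_0,b_1,b_2,b_3,b_4) = (q, q−1, q−1, 1, 0) and (c_0,c_1,c_2,c_3,c_4) = (0, 1, 1, q−1, q). -/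
open SimpleGraph

section Aux

open Classical

variable {F : Type*} [Field F]

lemma AG_adj_inl_inr {p l : F × F} : (AGGraph F).Adj (.inl p) (.inr l) ↔ AGOnLine F p l := Iff.rfl
lemma AG_adj_inr_inl {p l : F × F} : (AGGraph F).Adj (.inr l) (.inl p) ↔ AGOnLine F p l := Iff.rfl
lemma AG_not_adj_inl_inl {p p' : F × F} : ¬ (AGGraph F).Adj (.inl p) (.inl p') := fun h => h
lemma AG_not_adj_inr_inr {l l' : F × F} : ¬ (AGGraph F).Adj (.inr l) (.inr l') := fun h => h

noncomputable def AGpt (l : F × F) (x : F) : F × F := if l.1 = 0 then (l.2, x) else (x, l.2 - l.1 * x)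

noncomputable def AGln (p : F × F) (m : F) : F × F := if m = 0 then (0, p.1) else (m, m * p.1 + p.2)

lemma AGln_fst (p : F × F) (m : F) : (AGln p m).1 = m := by
  unfold AGln; split_ifs with h
  · simp [h]
  · rfl

lemma AGpt_on (l : F × F) (x : F) : AGOnLine F (AGpt l x) l := by
  unfold AGpt AGOnLine; split_ifs with h
  · exact Or.inl ⟨h, rfl⟩
  · exact Or.inr ⟨h, by ring⟩

lemma AGpt_inj (l : F × F) : Function.Injective (AGpt l) := by
  intro x y hxy; unfold AGpt at hxy; split_ifs at hxy
  · exact (Prod.ext_iff.1 hxy).2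
  · exact (Prod.ext_iff.1 hxy).1

lemma AGon_iff {w l : F × F} : AGOnLine F w l ↔ ∃ x, AGpt l x = w := by
  constructor
  · rintro (⟨h0, hx⟩ | ⟨h0, hk⟩)
    · exact ⟨w.2, by simp only [AGpt, if_pos h0]; exact Prod.ext_iff.2 ⟨hx.symm, rfl⟩⟩
    · exact ⟨w.1, by simp only [AGpt, if_neg h0]
                     exact Prod.ext_iff.2 ⟨rfl, by linear_combination -hk⟩⟩
  · rintro ⟨x, rfl⟩; exact AGpt_on l x

lemma AGp_on_ln (p : F × F) (m : F) : AGOnLine F p (AGln p m) := by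
  unfold AGln AGOnLine; split_ifs with h
  · exact Or.inl ⟨rfl, rfl⟩
  · exact Or.inr ⟨h, rfl⟩

lemma AGln_eq {p l : F × F} (h : AGOnLine F p l) : AGln p l.1 = l := by
  rcases h with ⟨h0, hx⟩ | ⟨h0, hk⟩
  · simp only [AGln, if_pos h0]; exact Prod.ext_iff.2 ⟨h0.symm, hx⟩
  · simp only [AGln, if_neg h0]; exact Prod.ext_iff.2 ⟨rfl, hk⟩

lemma AGln_inj (p : F × F) : Function.Injective (AGln p) := fun m m' h => by
  rw [← AGln_fst p m, h, AGln_fst]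

lemma AGthru_iff {p l : F × F} : AGOnLine F p l ↔ ∃ m, AGln p m = l :=
  ⟨fun h => ⟨l.1, AGln_eq h⟩, by rintro ⟨m, rfl⟩; exact AGp_on_ln p m⟩

lemma AGpt_eq {p l : F × F} (h : AGOnLine F p l) :
    AGpt l (if l.1 = 0 then p.2 else p.1) = p := by
  rcases h with ⟨h0, hx⟩ | ⟨h0, hk⟩
  · simp only [AGpt, if_pos h0]; exact Prod.ext_iff.2 ⟨hx.symm, rfl⟩
  · simp only [AGpt, if_neg h0]; exact Prod.ext_iff.2 ⟨rfl, by linear_combination -hk⟩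

lemma AG_no_common_line {p p' : F × F} (h1 : p.1 ≠ p'.1) (h2 : p.2 = p'.2) {l : F × F}
    (hp : AGOnLine F p l) (hp' : AGOnLine F p' l) : False := by
  rcases hp with ⟨h0, hx⟩ | ⟨h0, hk⟩ <;> rcases hp' with ⟨h0', hx'⟩ | ⟨h0', hk'⟩
  · exact h1 (hx.trans hx'.symm)
  · exact h0' h0
  · exact h0 h0'
  · have : l.1 * p.1 = l.1 * p'.1 := by linear_combination hk - hk' - h2
    exact h1 (mul_left_cancel₀ h0 this)

lemma AG_join_of_on {p p' l : F × F} (hp : AGOnLine F p l) (hp' : AGOnLine F p' l) :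
    p.1 = p'.1 ∨ p.2 ≠ p'.2 := by
  by_contra hc; push_neg at hc; exact AG_no_common_line hc.1 hc.2 hp hp'

lemma AG_exists_line {p p' : F × F} (h : p.1 = p'.1 ∨ p.2 ≠ p'.2) :
    ∃ l, AGOnLine F p l ∧ AGOnLine F p' l := by
  by_cases h1 : p.1 = p'.1
  · exact ⟨(0, p.1), Or.inl ⟨rfl, rfl⟩, Or.inl ⟨rfl, h1.symm⟩⟩
  · have h2 : p.2 ≠ p'.2 := h.resolve_left h1
    have hd : p.1 - p'.1 ≠ 0 := sub_ne_zero.2 h1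
    have hm : (p'.2 - p.2) / (p.1 - p'.1) ≠ 0 :=
      div_ne_zero (sub_ne_zero.2 (Ne.symm h2)) hd
    refine ⟨((p'.2 - p.2) / (p.1 - p'.1), (p'.2 - p.2) / (p.1 - p'.1) * p.1 + p.2),
      Or.inr ⟨hm, rfl⟩, Or.inr ⟨hm, ?_⟩⟩
    show (p'.2 - p.2) / (p.1 - p'.1) * p'.1 + p'.2 = (p'.2 - p.2) / (p.1 - p'.1) * p.1 + p.2
    field_simp
    ring

lemma AG_exists_point {l l' : F × F} (h : l.1 ≠ l'.1) :
    ∃ p, AGOnLine F p l ∧ AGOnLine F p l' := by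
  by_cases h0 : l.1 = 0
  · have h0' : l'.1 ≠ 0 := fun hc => h (h0.trans hc.symm)
    exact ⟨(l.2, l'.2 - l'.1 * l.2), Or.inl ⟨h0, rfl⟩, Or.inr ⟨h0', by ring⟩⟩
  by_cases h0' : l'.1 = 0
  · exact ⟨(l'.2, l.2 - l.1 * l'.2), Or.inr ⟨h0, by ring⟩, Or.inl ⟨h0', rfl⟩⟩
  · have hd : l.1 - l'.1 ≠ 0 := sub_ne_zero.2 h
    refine ⟨((l.2 - l'.2) / (l.1 - l'.1), l.2 - l.1 * ((l.2 - l'.2) / (l.1 - l'.1))),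
      Or.inr ⟨h0, by ring⟩, Or.inr ⟨h0', ?_⟩⟩
    show l'.1 * ((l.2 - l'.2) / (l.1 - l'.1)) + (l.2 - l.1 * ((l.2 - l'.2) / (l.1 - l'.1))) = l'.2
    field_simp
    ring

lemma AG_line_unique {p p' l l' : F × F} (hne : p ≠ p')
    (h1 : AGOnLine F p l) (h2 : AGOnLine F p' l) (h1' : AGOnLine F p l')
    (h2' : AGOnLine F p' l') : l = l' := by
  by_cases hx : p.1 = p'.1
  · have hl0 : ∀ {m : F × F}, AGOnLine F p m → AGOnLine F p' m → m = (0, p.1) := by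
      rintro m (⟨a, b⟩ | ⟨a, b⟩) (⟨c, d⟩ | ⟨c, d⟩)
      · exact Prod.ext_iff.2 ⟨a, b.symm⟩
      · exact absurd a c
      · exact absurd c a
      · exfalso
        have hy : p.2 = p'.2 := by
          have : m.1 * p.1 = m.1 * p'.1 := by rw [hx]
          linear_combination b - d - this
        exact hne (Prod.ext_iff.2 ⟨hx, hy⟩)
    rw [hl0 h1 h2, hl0 h1' h2']
  · have hl : ∀ {m : F × F}, AGOnLine F p m → AGOnLine F p' m →
        m = ((p'.2 - p.2) / (p.1 - p'.1), (p'.2 - p.2) / (p.1 - p'.1) * p.1 + p.2) := by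
      rintro m (⟨a, b⟩ | ⟨a, b⟩) (⟨c, d⟩ | ⟨c, d⟩)
      · exact absurd (b.trans d.symm) hx
      · exact absurd a c
      · exact absurd c a
      · have hm : m.1 = (p'.2 - p.2) / (p.1 - p'.1) := by
          rw [eq_div_iff (sub_ne_zero.2 hx)]
          linear_combination b - d
        exact Prod.ext_iff.2 ⟨hm, by rw [← hm]; linear_combination -b⟩
    rw [hl h1 h2, hl h1' h2']

lemma AG_point_unique {l l' p p' : F × F} (hne : l ≠ l')
    (h1 : AGOnLine F p l) (h2 : AGOnLine F p l') (h3 : AGOnLine F p' l)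
    (h4 : AGOnLine F p' l') : p = p' := by
  by_contra hc; exact hne (AG_line_unique hc h1 h3 h2 h4)

lemma AG_line_eq_of_fst {p l l' : F × F} (h1 : AGOnLine F p l) (h2 : AGOnLine F p l')
    (hs : l.1 = l'.1) : l = l' := by
  rcases h1 with ⟨a, b⟩ | ⟨a, b⟩ <;> rcases h2 with ⟨c, d⟩ | ⟨c, d⟩
  · exact Prod.ext_iff.2 ⟨hs, b.symm.trans d⟩
  · exact absurd (by rw [← hs]; exact a) c
  · exact absurd (by rw [hs]; exact c) a
  · refine Prod.ext_iff.2 ⟨hs, ?_⟩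
    rw [← b, ← d, hs]

lemma AG_no_common_point {l l' : F × F} (hs : l.1 = l'.1) (hne : l ≠ l') {p : F × F}
    (h1 : AGOnLine F p l) (h2 : AGOnLine F p l') : False :=
  hne (AG_line_eq_of_fst h1 h2 hs)

end Aux
section Walks

lemma AG_walk_adj_one {V : Type*} {G : SimpleGraph V} {u v : V} (w : G.Walk u v)
    (h : w.length = 1) : G.Adj u v := by
  have h0 := w.adj_getVert_succ (i := 0) (by omega)
  rwa [w.getVert_zero, show (0 + 1 : ℕ) = w.length by omega, w.getVert_length] at h0

lemma AG_walk_adj_two {V : Type*} {G : SimpleGraph V} {u v : V} (w : G.Walk u v)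
    (h : w.length = 2) : ∃ x, G.Adj u x ∧ G.Adj x v := by
  refine ⟨w.getVert 1, ?_, ?_⟩
  · have h0 := w.adj_getVert_succ (i := 0) (by omega)
    rwa [w.getVert_zero] at h0
  · have h1 := w.adj_getVert_succ (i := 1) (by omega)
    rwa [show (1 + 1 : ℕ) = w.length by omega, w.getVert_length] at h1

lemma AG_walk_adj_three {V : Type*} {G : SimpleGraph V} {u v : V} (w : G.Walk u v)
    (h : w.length = 3) : ∃ x y, G.Adj u x ∧ G.Adj x y ∧ G.Adj y v := by
  refine ⟨w.getVert 1, w.getVert 2, ?_, ?_, ?_⟩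
  · have h0 := w.adj_getVert_succ (i := 0) (by omega)
    rwa [w.getVert_zero] at h0
  · exact w.adj_getVert_succ (i := 1) (by omega)
  · have h2 := w.adj_getVert_succ (i := 2) (by omega)
    rwa [show (2 + 1 : ℕ) = w.length by omega, w.getVert_length] at h2

end Walks

section Dist

open Classical

variable {F : Type*} [Field F]

lemma AG_dist_le_and_reachable {V : Type*} {G : SimpleGraph V} {u v : V} (n : ℕ)
    (w : G.Walk u v) (h : w.length = n) : G.dist u v ≤ n ∧ G.Reachable u v :=
  ⟨h ▸ SimpleGraph.dist_le w, w.reachable⟩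

lemma AG_dist_pl_of_on {p l : F × F} (h : AGOnLine F p l) :
    (AGGraph F).dist (Sum.inl p) (Sum.inr l) = 1 := by
  obtain ⟨hle, hre'⟩ := AG_dist_le_and_reachable (G := AGGraph F) (u := Sum.inl p) (v := Sum.inr l) 1
    (    Walk.cons (AG_adj_inl_inr.2 h) Walk.nil) (by simp)
  have hne : (AGGraph F).dist (Sum.inl p) (Sum.inr l) ≠ 0 := by
    intro h0
    exact Sum.inl_ne_inr (hre'.dist_eq_zero_iff.1 h0)
  omega

lemma AG_dist_pl_of_not_on {p l : F × F} (h : ¬ AGOnLine F p l) :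
    (AGGraph F).dist (Sum.inl p) (Sum.inr l) = 3 := by
  obtain ⟨w0, hw0l, hjoin⟩ : ∃ w0 : F × F, AGOnLine F w0 l ∧ (p.1 = w0.1 ∨ p.2 ≠ w0.2) := by
    by_cases h0 : l.1 = 0
    · refine ⟨(l.2, p.2 + 1), Or.inl ⟨h0, rfl⟩, Or.inr fun hy => ?_⟩
      simp at hy
    · exact ⟨(p.1, l.2 - l.1 * p.1), Or.inr ⟨h0, by ring⟩, Or.inl rfl⟩
  obtain ⟨l'', h1, h2⟩ := AG_exists_line hjoin
  obtain ⟨hle, hre'⟩ := AG_dist_le_and_reachable (G := AGGraph F) (u := Sum.inl p) (v := Sum.inr l) 3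
    (    Walk.cons (AG_adj_inl_inr.2 h1) (Walk.cons (AG_adj_inr_inl.2 h2)
      (Walk.cons (AG_adj_inl_inr.2 hw0l) Walk.nil))) (by simp)
  have hre : (AGGraph F).Reachable (Sum.inl p) (Sum.inr l) := hre'
  have hne0 : (AGGraph F).dist (Sum.inl p) (Sum.inr l) ≠ 0 := by
    intro h0
    exact Sum.inl_ne_inr (hre.dist_eq_zero_iff.1 h0)
  have hne1 : (AGGraph F).dist (Sum.inl p) (Sum.inr l) ≠ 1 := by
    intro h1'
    obtain ⟨ww, hww⟩ := hre.exists_walk_length_eq_dist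
    exact h (AG_walk_adj_one ww (hww.trans h1'))
  have hne2 : (AGGraph F).dist (Sum.inl p) (Sum.inr l) ≠ 2 := by
    intro h2'
    obtain ⟨ww, hww⟩ := hre.exists_walk_length_eq_dist
    obtain ⟨x, hx1, hx2⟩ := AG_walk_adj_two ww (hww.trans h2')
    cases x with
    | inl a => exact AG_not_adj_inl_inl hx1
    | inr a => exact AG_not_adj_inr_inr hx2
  omega

lemma AG_dist_pp_of_ne {p p' : F × F} (hne : p ≠ p') (hj : p.1 = p'.1 ∨ p.2 ≠ p'.2) :
    (AGGraph F).dist (Sum.inl p) (Sum.inl p') = 2 := by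
  obtain ⟨l, h1, h2⟩ := AG_exists_line hj
  obtain ⟨hle, hre'⟩ := AG_dist_le_and_reachable (G := AGGraph F) (u := Sum.inl p) (v := Sum.inl p') 2
    (    Walk.cons (AG_adj_inl_inr.2 h1) (Walk.cons (AG_adj_inr_inl.2 h2) Walk.nil)) (by simp)
  have hre : (AGGraph F).Reachable (Sum.inl p) (Sum.inl p') := hre'
  have hne0 : (AGGraph F).dist (Sum.inl p) (Sum.inl p') ≠ 0 := by
    intro h0
    exact hne (Sum.inl_injective (hre.dist_eq_zero_iff.1 h0))
  have hne1 : (AGGraph F).dist (Sum.inl p) (Sum.inl p') ≠ 1 := by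
    intro h1'
    obtain ⟨ww, hww⟩ := hre.exists_walk_length_eq_dist
    exact AG_not_adj_inl_inl (AG_walk_adj_one ww (hww.trans h1'))
  omega

lemma AG_dist_pp_far {p p' : F × F} (hx : p.1 ≠ p'.1) (hy : p.2 = p'.2) :
    (AGGraph F).dist (Sum.inl p) (Sum.inl p') = 4 := by
  obtain ⟨l1, ha, hb⟩ := AG_exists_line (p := p) (p' := (p.1, p.2 + 1)) (Or.inl rfl)
  obtain ⟨l2, hc, hd⟩ := AG_exists_line (p := (p.1, p.2 + 1)) (p' := p')
    (Or.inr (by rw [← hy]; intro hcon; simp at hcon))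
  obtain ⟨hle, hre'⟩ := AG_dist_le_and_reachable (G := AGGraph F) (u := Sum.inl p) (v := Sum.inl p') 4
    (    Walk.cons (AG_adj_inl_inr.2 ha) (Walk.cons (AG_adj_inr_inl.2 hb)
      (Walk.cons (AG_adj_inl_inr.2 hc) (Walk.cons (AG_adj_inr_inl.2 hd) Walk.nil)))) (by simp)
  have hre : (AGGraph F).Reachable (Sum.inl p) (Sum.inl p') := hre'
  have hne0 : (AGGraph F).dist (Sum.inl p) (Sum.inl p') ≠ 0 := by
    intro h0
    have := Sum.inl_injective (hre.dist_eq_zero_iff.1 h0)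
    rw [this] at hx; exact hx rfl
  have hne1 : (AGGraph F).dist (Sum.inl p) (Sum.inl p') ≠ 1 := by
    intro h1'
    obtain ⟨ww, hww⟩ := hre.exists_walk_length_eq_dist
    exact AG_not_adj_inl_inl (AG_walk_adj_one ww (hww.trans h1'))
  have hne2 : (AGGraph F).dist (Sum.inl p) (Sum.inl p') ≠ 2 := by
    intro h2'
    obtain ⟨ww, hww⟩ := hre.exists_walk_length_eq_dist
    obtain ⟨x, hx1, hx2⟩ := AG_walk_adj_two ww (hww.trans h2')
    cases x with
    | inl a => exact AG_not_adj_inl_inl hx1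
    | inr a => exact AG_no_common_line hx hy (AG_adj_inl_inr.1 hx1) (AG_adj_inr_inl.1 hx2)
  have hne3 : (AGGraph F).dist (Sum.inl p) (Sum.inl p') ≠ 3 := by
    intro h3'
    obtain ⟨ww, hww⟩ := hre.exists_walk_length_eq_dist
    obtain ⟨x, y, hx1, hx2, hx3⟩ := AG_walk_adj_three ww (hww.trans h3')
    cases x with
    | inl a => exact AG_not_adj_inl_inl hx1
    | inr a =>
      cases y with
      | inl b => exact AG_not_adj_inl_inl hx3
      | inr b => exact AG_not_adj_inr_inr hx2
  omega

lemma AG_dist_ll_meet {l l' : F × F} (hne : l ≠ l') (hs : l.1 ≠ l'.1) :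
    (AGGraph F).dist (Sum.inr l) (Sum.inr l') = 2 := by
  obtain ⟨p, h1, h2⟩ := AG_exists_point hs
  obtain ⟨hle, hre'⟩ := AG_dist_le_and_reachable (G := AGGraph F) (u := Sum.inr l) (v := Sum.inr l') 2
    (    Walk.cons (AG_adj_inr_inl.2 h1) (Walk.cons (AG_adj_inl_inr.2 h2) Walk.nil)) (by simp)
  have hre : (AGGraph F).Reachable (Sum.inr l) (Sum.inr l') := hre'
  have hne0 : (AGGraph F).dist (Sum.inr l) (Sum.inr l') ≠ 0 := by
    intro h0
    exact hne (Sum.inr_injective (hre.dist_eq_zero_iff.1 h0))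
  have hne1 : (AGGraph F).dist (Sum.inr l) (Sum.inr l') ≠ 1 := by
    intro h1'
    obtain ⟨ww, hww⟩ := hre.exists_walk_length_eq_dist
    exact AG_not_adj_inr_inr (AG_walk_adj_one ww (hww.trans h1'))
  omega

lemma AG_dist_ll_par {l l' : F × F} (hne : l ≠ l') (hs : l.1 = l'.1) :
    (AGGraph F).dist (Sum.inr l) (Sum.inr l') = 4 := by
  have hjoin : (AGpt l 0).1 = (AGpt l' (if l.1 = 0 then 1 else 0)).1 ∨
      (AGpt l 0).2 ≠ (AGpt l' (if l.1 = 0 then 1 else 0)).2 := by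
    by_cases h0 : l.1 = 0
    · have h0' : l'.1 = 0 := hs ▸ h0
      right
      simp only [AGpt, if_pos h0, if_pos h0']
      exact zero_ne_one
    · have h0' : ¬ l'.1 = 0 := hs ▸ h0
      left
      simp only [AGpt, if_neg h0, if_neg h0']
  obtain ⟨l'', h1, h2⟩ := AG_exists_line hjoin
  obtain ⟨hle, hre'⟩ := AG_dist_le_and_reachable (G := AGGraph F) (u := Sum.inr l) (v := Sum.inr l') 4
    (    Walk.cons (AG_adj_inr_inl.2 (AGpt_on l 0)) (Walk.cons (AG_adj_inl_inr.2 h1)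
      (Walk.cons (AG_adj_inr_inl.2 h2)
        (Walk.cons (AG_adj_inl_inr.2 (AGpt_on l' _)) Walk.nil)))) (by simp)
  have hre : (AGGraph F).Reachable (Sum.inr l) (Sum.inr l') := hre'
  have hne0 : (AGGraph F).dist (Sum.inr l) (Sum.inr l') ≠ 0 := by
    intro h0
    exact hne (Sum.inr_injective (hre.dist_eq_zero_iff.1 h0))
  have hne1 : (AGGraph F).dist (Sum.inr l) (Sum.inr l') ≠ 1 := by
    intro h1'
    obtain ⟨ww, hww⟩ := hre.exists_walk_length_eq_dist
    exact AG_not_adj_inr_inr (AG_walk_adj_one ww (hww.trans h1'))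
  have hne2 : (AGGraph F).dist (Sum.inr l) (Sum.inr l') ≠ 2 := by
    intro h2'
    obtain ⟨ww, hww⟩ := hre.exists_walk_length_eq_dist
    obtain ⟨x, hx1, hx2⟩ := AG_walk_adj_two ww (hww.trans h2')
    cases x with
    | inl a => exact AG_no_common_point hs hne (AG_adj_inr_inl.1 hx1) (AG_adj_inl_inr.1 hx2)
    | inr a => exact AG_not_adj_inr_inr hx1
  have hne3 : (AGGraph F).dist (Sum.inr l) (Sum.inr l') ≠ 3 := by
    intro h3'
    obtain ⟨ww, hww⟩ := hre.exists_walk_length_eq_dist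
    obtain ⟨x, y, hx1, hx2, hx3⟩ := AG_walk_adj_three ww (hww.trans h3')
    cases x with
    | inl a =>
      cases y with
      | inl b => exact AG_not_adj_inl_inl hx2
      | inr b => exact AG_not_adj_inr_inr hx3
    | inr a => exact AG_not_adj_inr_inr hx1
  omega

lemma AG_dist_pp_cases (p p' : F × F) :
    (p = p' ∧ (AGGraph F).dist (Sum.inl p) (Sum.inl p') = 0) ∨
    (p ≠ p' ∧ (p.1 = p'.1 ∨ p.2 ≠ p'.2) ∧ (AGGraph F).dist (Sum.inl p) (Sum.inl p') = 2) ∨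
    (p.1 ≠ p'.1 ∧ p.2 = p'.2 ∧ (AGGraph F).dist (Sum.inl p) (Sum.inl p') = 4) := by
  by_cases he : p = p'
  · exact Or.inl ⟨he, by rw [he]; exact SimpleGraph.dist_self⟩
  by_cases hj : p.1 = p'.1 ∨ p.2 ≠ p'.2
  · exact Or.inr (Or.inl ⟨he, hj, AG_dist_pp_of_ne he hj⟩)
  · push_neg at hj
    exact Or.inr (Or.inr ⟨hj.1, hj.2, AG_dist_pp_far hj.1 hj.2⟩)

lemma AG_dist_pl_cases (p l : F × F) :
    (AGOnLine F p l ∧ (AGGraph F).dist (Sum.inl p) (Sum.inr l) = 1) ∨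
    (¬ AGOnLine F p l ∧ (AGGraph F).dist (Sum.inl p) (Sum.inr l) = 3) := by
  by_cases h : AGOnLine F p l
  · exact Or.inl ⟨h, AG_dist_pl_of_on h⟩
  · exact Or.inr ⟨h, AG_dist_pl_of_not_on h⟩

lemma AG_dist_ll_cases (l l' : F × F) :
    (l = l' ∧ (AGGraph F).dist (Sum.inr l) (Sum.inr l') = 0) ∨
    (l ≠ l' ∧ l.1 ≠ l'.1 ∧ (AGGraph F).dist (Sum.inr l) (Sum.inr l') = 2) ∨
    (l ≠ l' ∧ l.1 = l'.1 ∧ (AGGraph F).dist (Sum.inr l) (Sum.inr l') = 4) := by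
  by_cases he : l = l'
  · exact Or.inl ⟨he, by rw [he]; exact SimpleGraph.dist_self⟩
  by_cases hs : l.1 = l'.1
  · exact Or.inr (Or.inr ⟨he, hs, AG_dist_ll_par he hs⟩)
  · exact Or.inr (Or.inl ⟨he, hs, AG_dist_ll_meet he hs⟩)

end Dist
section Count

open Classical

variable {F : Type*} [Field F]

lemma AG_card_nbrs_inr (l : F × F) (P : AGVertex F → Prop) (T : Set F)
    (h : ∀ x : F, P (Sum.inl (AGpt l x)) ↔ x ∈ T) :
    Nat.card {w : AGVertex F | (AGGraph F).Adj (Sum.inr l) w ∧ P w} = T.ncard := by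
  have heq : {w : AGVertex F | (AGGraph F).Adj (Sum.inr l) w ∧ P w}
      = (fun x => (Sum.inl (AGpt l x) : AGVertex F)) '' T := by
    ext w
    simp only [Set.mem_setOf_eq, Set.mem_image]
    constructor
    · rintro ⟨hadj, hP⟩
      cases w with
      | inl a =>
        obtain ⟨x, hx⟩ := AGon_iff.1 (AG_adj_inr_inl.1 hadj)
        exact ⟨x, (h x).1 (by rw [hx]; exact hP), by rw [hx]⟩
      | inr a => exact absurd hadj AG_not_adj_inr_inr
    · rintro ⟨x, hx, rfl⟩
      exact ⟨AG_adj_inr_inl.2 (AGpt_on l x), (h x).2 hx⟩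
  rw [Nat.card_coe_set_eq, heq,
    Set.ncard_image_of_injective T (show Function.Injective (fun x => (Sum.inl (AGpt l x) : AGVertex F)) from Sum.inl_injective.comp (AGpt_inj l))]

lemma AG_card_nbrs_inl (p : F × F) (P : AGVertex F → Prop) (T : Set F)
    (h : ∀ m : F, P (Sum.inr (AGln p m)) ↔ m ∈ T) :
    Nat.card {w : AGVertex F | (AGGraph F).Adj (Sum.inl p) w ∧ P w} = T.ncard := by
  have heq : {w : AGVertex F | (AGGraph F).Adj (Sum.inl p) w ∧ P w}
      = (fun m => (Sum.inr (AGln p m) : AGVertex F)) '' T := by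
    ext w
    simp only [Set.mem_setOf_eq, Set.mem_image]
    constructor
    · rintro ⟨hadj, hP⟩
      cases w with
      | inl a => exact absurd hadj AG_not_adj_inl_inl
      | inr a =>
        obtain ⟨m, hm⟩ := AGthru_iff.1 (AG_adj_inl_inr.1 hadj)
        exact ⟨m, (h m).1 (by rw [hm]; exact hP), by rw [hm]⟩
    · rintro ⟨m, hm, rfl⟩
      exact ⟨AG_adj_inl_inr.2 (AGp_on_ln p m), (h m).2 hm⟩
  rw [Nat.card_coe_set_eq, heq,
    Set.ncard_image_of_injective T (show Function.Injective (fun m => (Sum.inr (AGln p m) : AGVertex F)) from Sum.inr_injective.comp (AGln_inj p))]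

variable [Fintype F]

lemma AG_ncard_univ (q : ℕ) (hF : Fintype.card F = q) : (Set.univ : Set F).ncard = q := by
  rw [Set.ncard_univ, Nat.card_eq_fintype_card, hF]

lemma AG_ncard_ne (q : ℕ) (hF : Fintype.card F = q) (a : F) :
    {x : F | x ≠ a}.ncard = q - 1 := by
  have : {x : F | x ≠ a} = Set.univ \ {a} := by ext x; simp
  rw [this, Set.ncard_diff_singleton_of_mem (Set.mem_univ a), Set.ncard_univ,
    Nat.card_eq_fintype_card, hF]

end Count
section Main

open Classical

set_option linter.unusedSectionVars false

variable {F : Type*} [Field F] [Fintype F]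

lemma AG_count_inl (p : F × F) {P : AGVertex F → Prop} (T : Set F) {n : ℕ}
    (h : ∀ m : F, P (Sum.inr (AGln p m)) ↔ m ∈ T) (hT : T.ncard = n) :
    Nat.card {w : AGVertex F | (AGGraph F).Adj (Sum.inl p) w ∧ P w} = n :=
  (AG_card_nbrs_inl p P T h).trans hT

lemma AG_count_inr (l : F × F) {P : AGVertex F → Prop} (T : Set F) {n : ℕ}
    (h : ∀ x : F, P (Sum.inl (AGpt l x)) ↔ x ∈ T) (hT : T.ncard = n) :
    Nat.card {w : AGVertex F | (AGGraph F).Adj (Sum.inr l) w ∧ P w} = n :=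
  (AG_card_nbrs_inr l P T h).trans hT

lemma AG_main_pp (q : ℕ) (hF : Fintype.card F = q) (p p' : F × F) (i : Fin 5)
    (h : (AGGraph F).dist (Sum.inl p) (Sum.inl p') = (i : ℕ)) :
    Nat.card {w : AGVertex F |
        (AGGraph F).Adj (Sum.inl p') w ∧ (AGGraph F).dist (Sum.inl p) w = (i : ℕ) + 1} =
      ![q, q - 1, q - 1, 1, 0] i ∧
    Nat.card {w : AGVertex F |
        (AGGraph F).Adj (Sum.inl p') w ∧ (AGGraph F).dist (Sum.inl p) w = (i : ℕ) - 1} =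
      ![0, 1, 1, q - 1, q] i := by
  rcases AG_dist_pp_cases p p' with ⟨he, hd⟩ | ⟨hne, hj, hd⟩ | ⟨hx, hy, hd⟩
  · -- distance 0 : p = p'
    subst he
    fin_cases i
    · constructor
      · show Nat.card {w : AGVertex F |
            (AGGraph F).Adj (Sum.inl p) w ∧ (AGGraph F).dist (Sum.inl p) w = 1} = q
        refine AG_count_inl p Set.univ (fun m => ?_) (AG_ncard_univ q hF)
        simp [AG_dist_pl_of_on (AGp_on_ln p m)]
      · show Nat.card {w : AGVertex F |
            (AGGraph F).Adj (Sum.inl p) w ∧ (AGGraph F).dist (Sum.inl p) w = 0} = 0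
        refine AG_count_inl p (∅ : Set F) (fun m => ?_) (Set.ncard_empty F)
        simp [AG_dist_pl_of_on (AGp_on_ln p m)]
    all_goals exfalso; rw [hd] at h; norm_num at h
  · -- distance 2
    obtain ⟨l, hl, hl'⟩ := AG_exists_line hj
    have key : ∀ m : F, AGOnLine F p (AGln p' m) ↔ m = l.1 := by
      intro m
      constructor
      · intro hon
        have := AG_line_unique hne hon (AGp_on_ln p' m) hl hl'
        rw [← this, AGln_fst]
      · rintro rfl
        rw [AGln_eq hl']
        exact hl
    have hdist : ∀ m : F, ((AGGraph F).dist (Sum.inl p) (Sum.inr (AGln p' m)) = 3 ↔ m ≠ l.1)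
        ∧ ((AGGraph F).dist (Sum.inl p) (Sum.inr (AGln p' m)) = 1 ↔ m = l.1) := by
      intro m
      rcases AG_dist_pl_cases p (AGln p' m) with ⟨hon, hdd⟩ | ⟨hon, hdd⟩
      · rw [hdd]
        exact ⟨⟨fun h13 => absurd h13 (by norm_num), fun hm => absurd ((key m).1 hon) hm⟩,
          by simp [(key m).1 hon]⟩
      · rw [hdd]
        exact ⟨⟨fun _ hm => hon ((key m).2 hm), fun _ => rfl⟩,
          ⟨fun h31 => absurd h31 (by norm_num), fun hm => absurd ((key m).2 hm) hon⟩⟩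
    fin_cases i
    · exfalso; rw [hd] at h; norm_num at h
    · exfalso; rw [hd] at h; norm_num at h
    · constructor
      · show Nat.card {w : AGVertex F |
            (AGGraph F).Adj (Sum.inl p') w ∧ (AGGraph F).dist (Sum.inl p) w = 3} = q - 1
        refine AG_count_inl p' {m : F | m ≠ l.1} (fun m => (hdist m).1) (AG_ncard_ne q hF l.1)
      · show Nat.card {w : AGVertex F |
            (AGGraph F).Adj (Sum.inl p') w ∧ (AGGraph F).dist (Sum.inl p) w = 1} = 1
        refine AG_count_inl p' ({l.1} : Set F) (fun m => ?_) (Set.ncard_singleton l.1)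
        rw [Set.mem_singleton_iff]
        exact (hdist m).2
    · exfalso; rw [hd] at h; norm_num at h
    · exfalso; rw [hd] at h; norm_num at h
  · -- distance 4
    have hnot : ∀ m : F, ¬ AGOnLine F p (AGln p' m) := fun m hon =>
      AG_no_common_line hx hy hon (AGp_on_ln p' m)
    fin_cases i
    · exfalso; rw [hd] at h; norm_num at h
    · exfalso; rw [hd] at h; norm_num at h
    · exfalso; rw [hd] at h; norm_num at h
    · exfalso; rw [hd] at h; norm_num at h
    · constructor
      · show Nat.card {w : AGVertex F |
            (AGGraph F).Adj (Sum.inl p') w ∧ (AGGraph F).dist (Sum.inl p) w = 5} = 0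
        refine AG_count_inl p' (∅ : Set F) (fun m => ?_) (Set.ncard_empty F)
        simp [AG_dist_pl_of_not_on (hnot m)]
      · show Nat.card {w : AGVertex F |
            (AGGraph F).Adj (Sum.inl p') w ∧ (AGGraph F).dist (Sum.inl p) w = 3} = q
        refine AG_count_inl p' Set.univ (fun m => ?_) (AG_ncard_univ q hF)
        simp [AG_dist_pl_of_not_on (hnot m)]

lemma AG_main_pl (q : ℕ) (hF : Fintype.card F = q) (p l : F × F) (i : Fin 5)
    (h : (AGGraph F).dist (Sum.inl p) (Sum.inr l) = (i : ℕ)) :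
    Nat.card {w : AGVertex F |
        (AGGraph F).Adj (Sum.inr l) w ∧ (AGGraph F).dist (Sum.inl p) w = (i : ℕ) + 1} =
      ![q, q - 1, q - 1, 1, 0] i ∧
    Nat.card {w : AGVertex F |
        (AGGraph F).Adj (Sum.inr l) w ∧ (AGGraph F).dist (Sum.inl p) w = (i : ℕ) - 1} =
      ![0, 1, 1, q - 1, q] i := by
  rcases AG_dist_pl_cases p l with ⟨hon, hd⟩ | ⟨hon, hd⟩
  · -- distance 1
    obtain ⟨x₀, hpt⟩ : ∃ x₀, AGpt l x₀ = p := ⟨_, AGpt_eq hon⟩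
    have key : ∀ x, AGpt l x = p ↔ x = x₀ := fun x =>
      ⟨fun he => AGpt_inj l (he.trans hpt.symm), fun he => he ▸ hpt⟩
    have hdist : ∀ x : F, ((AGGraph F).dist (Sum.inl p) (Sum.inl (AGpt l x)) = 2 ↔ x ≠ x₀)
        ∧ ((AGGraph F).dist (Sum.inl p) (Sum.inl (AGpt l x)) = 0 ↔ x = x₀) := by
      intro x
      by_cases hxx : x = x₀
      · subst hxx
        rw [hpt, SimpleGraph.dist_self]
        exact ⟨by simp, by simp⟩
      · have hne2 : p ≠ AGpt l x := fun he => hxx ((key x).1 he.symm)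
        rw [AG_dist_pp_of_ne hne2 (AG_join_of_on hon (AGpt_on l x))]
        exact ⟨by simp [hxx], by simp [hxx]⟩
    fin_cases i
    · exfalso; rw [hd] at h; norm_num at h
    · constructor
      · show Nat.card {w : AGVertex F |
            (AGGraph F).Adj (Sum.inr l) w ∧ (AGGraph F).dist (Sum.inl p) w = 2} = q - 1
        exact AG_count_inr l {x : F | x ≠ x₀} (fun x => (hdist x).1) (AG_ncard_ne q hF x₀)
      · show Nat.card {w : AGVertex F |
            (AGGraph F).Adj (Sum.inr l) w ∧ (AGGraph F).dist (Sum.inl p) w = 0} = 1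
        refine AG_count_inr l ({x₀} : Set F) (fun x => ?_) (Set.ncard_singleton x₀)
        rw [Set.mem_singleton_iff]
        exact (hdist x).2
    · exfalso; rw [hd] at h; norm_num at h
    · exfalso; rw [hd] at h; norm_num at h
    · exfalso; rw [hd] at h; norm_num at h
  · -- distance 3
    obtain ⟨x₂, hx₂⟩ : ∃ x₂ : F, ∀ x : F,
        ((AGGraph F).dist (Sum.inl p) (Sum.inl (AGpt l x)) = 4 ↔ x = x₂)
        ∧ ((AGGraph F).dist (Sum.inl p) (Sum.inl (AGpt l x)) = 2 ↔ x ≠ x₂) := by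
      by_cases h0 : l.1 = 0
      · refine ⟨p.2, fun x => ?_⟩
        have hpt : AGpt l x = (l.2, x) := by rw [AGpt, if_pos h0]
        have hne1 : p.1 ≠ l.2 := fun hc => hon (Or.inl ⟨h0, hc⟩)
        by_cases hx2 : x = p.2
        · rw [hpt, AG_dist_pp_far (p' := (l.2, x)) hne1 hx2.symm]
          exact ⟨by simp [hx2], by simp [hx2]⟩
        · rw [hpt, AG_dist_pp_of_ne (fun he => hx2 (congrArg Prod.snd he).symm)
            (Or.inr fun hc => hx2 hc.symm)]
          exact ⟨by simp [hx2], by simp [hx2]⟩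
      · refine ⟨(l.2 - p.2) / l.1, fun x => ?_⟩
        have hpt : AGpt l x = (x, l.2 - l.1 * x) := by rw [AGpt, if_neg h0]
        by_cases hx2 : x = (l.2 - p.2) / l.1
        · have hsnd : l.2 - l.1 * x = p.2 := by
            rw [hx2]
            field_simp
            ring
        
          have hfst : p.1 ≠ x := fun hc =>
            hon (Or.inr ⟨h0, by rw [hc]; linear_combination -hsnd⟩)
          rw [hpt, AG_dist_pp_far hfst hsnd.symm]
          exact ⟨by simp [hx2], by simp [hx2]⟩
        · have hsnd : p.2 ≠ l.2 - l.1 * x := by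
            intro hc
            apply hx2
            rw [eq_div_iff h0]
            linear_combination hc
          rw [hpt, AG_dist_pp_of_ne (fun he => hsnd (congrArg Prod.snd he)) (Or.inr hsnd)]
          exact ⟨by simp [hx2], by simp [hx2]⟩
    fin_cases i
    · exfalso; rw [hd] at h; norm_num at h
    · exfalso; rw [hd] at h; norm_num at h
    · exfalso; rw [hd] at h; norm_num at h
    · constructor
      · show Nat.card {w : AGVertex F |
            (AGGraph F).Adj (Sum.inr l) w ∧ (AGGraph F).dist (Sum.inl p) w = 4} = 1
        refine AG_count_inr l ({x₂} : Set F) (fun x => ?_) (Set.ncard_singleton x₂)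
        rw [Set.mem_singleton_iff]
        exact (hx₂ x).1
      · show Nat.card {w : AGVertex F |
            (AGGraph F).Adj (Sum.inr l) w ∧ (AGGraph F).dist (Sum.inl p) w = 2} = q - 1
        exact AG_count_inr l {x : F | x ≠ x₂} (fun x => (hx₂ x).2) (AG_ncard_ne q hF x₂)
    · exfalso; rw [hd] at h; norm_num at h

lemma AG_main_lp (q : ℕ) (hF : Fintype.card F = q) (l p : F × F) (i : Fin 5)
    (h : (AGGraph F).dist (Sum.inr l) (Sum.inl p) = (i : ℕ)) :
    Nat.card {w : AGVertex F |
        (AGGraph F).Adj (Sum.inl p) w ∧ (AGGraph F).dist (Sum.inr l) w = (i : ℕ) + 1} =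
      ![q, q - 1, q - 1, 1, 0] i ∧
    Nat.card {w : AGVertex F |
        (AGGraph F).Adj (Sum.inl p) w ∧ (AGGraph F).dist (Sum.inr l) w = (i : ℕ) - 1} =
      ![0, 1, 1, q - 1, q] i := by
  rw [SimpleGraph.dist_comm] at h
  rcases AG_dist_pl_cases p l with ⟨hon, hd⟩ | ⟨hon, hd⟩
  · -- distance 1
    have key : ∀ m : F, AGln p m = l ↔ m = l.1 := fun m =>
      ⟨fun he => by rw [← AGln_fst p m, he], fun he => he ▸ AGln_eq hon⟩
    have hdist : ∀ m : F, ((AGGraph F).dist (Sum.inr l) (Sum.inr (AGln p m)) = 2 ↔ m ≠ l.1)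
        ∧ ((AGGraph F).dist (Sum.inr l) (Sum.inr (AGln p m)) = 0 ↔ m = l.1) := by
      intro m
      by_cases hm : m = l.1
      · rw [(key m).2 hm, SimpleGraph.dist_self]
        exact ⟨by simp [hm], by simp [hm]⟩
      · have hne2 : l ≠ AGln p m := fun he => hm ((key m).1 he.symm)
        have hs : l.1 ≠ (AGln p m).1 := by
          rw [AGln_fst]; exact fun hc => hm hc.symm
        rw [AG_dist_ll_meet hne2 hs]
        exact ⟨by simp [hm], by simp [hm]⟩
    fin_cases i
    · exfalso; rw [hd] at h; norm_num at h
    · constructor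
      · show Nat.card {w : AGVertex F |
            (AGGraph F).Adj (Sum.inl p) w ∧ (AGGraph F).dist (Sum.inr l) w = 2} = q - 1
        exact AG_count_inl p {m : F | m ≠ l.1} (fun m => (hdist m).1) (AG_ncard_ne q hF l.1)
      · show Nat.card {w : AGVertex F |
            (AGGraph F).Adj (Sum.inl p) w ∧ (AGGraph F).dist (Sum.inr l) w = 0} = 1
        refine AG_count_inl p ({l.1} : Set F) (fun m => ?_) (Set.ncard_singleton l.1)
        rw [Set.mem_singleton_iff]
        exact (hdist m).2
    · exfalso; rw [hd] at h; norm_num at h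
    · exfalso; rw [hd] at h; norm_num at h
    · exfalso; rw [hd] at h; norm_num at h
  · -- distance 3
    have hnel : ∀ m : F, l ≠ AGln p m := fun m he =>
      hon (by rw [he]; exact AGp_on_ln p m)
    have hdist : ∀ m : F, ((AGGraph F).dist (Sum.inr l) (Sum.inr (AGln p m)) = 4 ↔ m = l.1)
        ∧ ((AGGraph F).dist (Sum.inr l) (Sum.inr (AGln p m)) = 2 ↔ m ≠ l.1) := by
      intro m
      by_cases hm : m = l.1
      · rw [AG_dist_ll_par (hnel m) (by rw [AGln_fst]; exact hm.symm)]
        exact ⟨by simp [hm], by simp [hm]⟩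
      · rw [AG_dist_ll_meet (hnel m) (by rw [AGln_fst]; exact fun hc => hm hc.symm)]
        exact ⟨by simp [hm], by simp [hm]⟩
    fin_cases i
    · exfalso; rw [hd] at h; norm_num at h
    · exfalso; rw [hd] at h; norm_num at h
    · exfalso; rw [hd] at h; norm_num at h
    · constructor
      · show Nat.card {w : AGVertex F |
            (AGGraph F).Adj (Sum.inl p) w ∧ (AGGraph F).dist (Sum.inr l) w = 4} = 1
        refine AG_count_inl p ({l.1} : Set F) (fun m => ?_) (Set.ncard_singleton l.1)
        rw [Set.mem_singleton_iff]
        exact (hdist m).1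
      · show Nat.card {w : AGVertex F |
            (AGGraph F).Adj (Sum.inl p) w ∧ (AGGraph F).dist (Sum.inr l) w = 2} = q - 1
        exact AG_count_inl p {m : F | m ≠ l.1} (fun m => (hdist m).2) (AG_ncard_ne q hF l.1)
    · exfalso; rw [hd] at h; norm_num at h

lemma AG_main_ll (q : ℕ) (hF : Fintype.card F = q) (l l' : F × F) (i : Fin 5)
    (h : (AGGraph F).dist (Sum.inr l) (Sum.inr l') = (i : ℕ)) :
    Nat.card {w : AGVertex F |
        (AGGraph F).Adj (Sum.inr l') w ∧ (AGGraph F).dist (Sum.inr l) w = (i : ℕ) + 1} =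
      ![q, q - 1, q - 1, 1, 0] i ∧
    Nat.card {w : AGVertex F |
        (AGGraph F).Adj (Sum.inr l') w ∧ (AGGraph F).dist (Sum.inr l) w = (i : ℕ) - 1} =
      ![0, 1, 1, q - 1, q] i := by
  rcases AG_dist_ll_cases l l' with ⟨he, hd⟩ | ⟨hne, hs, hd⟩ | ⟨hne, hs, hd⟩
  · -- distance 0
    subst he
    fin_cases i
    · constructor
      · show Nat.card {w : AGVertex F |
            (AGGraph F).Adj (Sum.inr l) w ∧ (AGGraph F).dist (Sum.inr l) w = 1} = q
        refine AG_count_inr l Set.univ (fun x => ?_) (AG_ncard_univ q hF)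
        rw [SimpleGraph.dist_comm]
        simp [AG_dist_pl_of_on (AGpt_on l x)]
      · show Nat.card {w : AGVertex F |
            (AGGraph F).Adj (Sum.inr l) w ∧ (AGGraph F).dist (Sum.inr l) w = 0} = 0
        refine AG_count_inr l (∅ : Set F) (fun x => ?_) (Set.ncard_empty F)
        rw [SimpleGraph.dist_comm]
        simp [AG_dist_pl_of_on (AGpt_on l x)]
    all_goals exfalso; rw [hd] at h; norm_num at h
  · -- distance 2
    obtain ⟨pc, hc1, hc2⟩ := AG_exists_point hs
    obtain ⟨x₁, hx₁⟩ : ∃ x₁, AGpt l' x₁ = pc := ⟨_, AGpt_eq hc2⟩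
    have key : ∀ x, AGOnLine F (AGpt l' x) l ↔ x = x₁ := by
      intro x
      constructor
      · intro honx
        have hpe := AG_point_unique hne honx (AGpt_on l' x) hc1 hc2
        exact AGpt_inj l' (by rw [hx₁]; exact hpe)
      · rintro rfl
        rw [hx₁]; exact hc1
    have hdist : ∀ x : F, ((AGGraph F).dist (Sum.inr l) (Sum.inl (AGpt l' x)) = 3 ↔ x ≠ x₁)
        ∧ ((AGGraph F).dist (Sum.inr l) (Sum.inl (AGpt l' x)) = 1 ↔ x = x₁) := by
      intro x
      rw [SimpleGraph.dist_comm]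
      by_cases hx : x = x₁
      · rw [AG_dist_pl_of_on ((key x).2 hx)]
        exact ⟨by simp [hx], by simp [hx]⟩
      · rw [AG_dist_pl_of_not_on (fun honx => hx ((key x).1 honx))]
        exact ⟨by simp [hx], by simp [hx]⟩
    fin_cases i
    · exfalso; rw [hd] at h; norm_num at h
    · exfalso; rw [hd] at h; norm_num at h
    · constructor
      · show Nat.card {w : AGVertex F |
            (AGGraph F).Adj (Sum.inr l') w ∧ (AGGraph F).dist (Sum.inr l) w = 3} = q - 1
        exact AG_count_inr l' {x : F | x ≠ x₁} (fun x => (hdist x).1) (AG_ncard_ne q hF x₁)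
      · show Nat.card {w : AGVertex F |
            (AGGraph F).Adj (Sum.inr l') w ∧ (AGGraph F).dist (Sum.inr l) w = 1} = 1
        refine AG_count_inr l' ({x₁} : Set F) (fun x => ?_) (Set.ncard_singleton x₁)
        rw [Set.mem_singleton_iff]
        exact (hdist x).2
    · exfalso; rw [hd] at h; norm_num at h
    · exfalso; rw [hd] at h; norm_num at h
  · -- distance 4
    have hnot : ∀ x : F, ¬ AGOnLine F (AGpt l' x) l := fun x honx =>
      AG_no_common_point hs hne honx (AGpt_on l' x)
    fin_cases i
    · exfalso; rw [hd] at h; norm_num at h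
    · exfalso; rw [hd] at h; norm_num at h
    · exfalso; rw [hd] at h; norm_num at h
    · exfalso; rw [hd] at h; norm_num at h
    · constructor
      · show Nat.card {w : AGVertex F |
            (AGGraph F).Adj (Sum.inr l') w ∧ (AGGraph F).dist (Sum.inr l) w = 5} = 0
        refine AG_count_inr l' (∅ : Set F) (fun x => ?_) (Set.ncard_empty F)
        rw [SimpleGraph.dist_comm]
        simp [AG_dist_pl_of_not_on (hnot x)]
      · show Nat.card {w : AGVertex F |
            (AGGraph F).Adj (Sum.inr l') w ∧ (AGGraph F).dist (Sum.inr l) w = 3} = q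
        refine AG_count_inr l' Set.univ (fun x => ?_) (AG_ncard_univ q hF)
        rw [SimpleGraph.dist_comm]
        simp [AG_dist_pl_of_not_on (hnot x)]

end Main

/-- For a prime power `q ≥ 3`, the graph `𝒜𝒢(2,q)` is
distance-regular with intersection array `{q, q-1, q-1, 1; 1, 1, q-1, q}`: whenever
`d(u,v) = i` with `0 ≤ i ≤ 4`, the number of neighbours of `v` at distance `i+1`
from `u` is `bᵢ` and the number of neighbours of `v` at distance `i-1` from `u` is
`cᵢ`, where `(b₀,…,b₄) = (q, q-1, q-1, 1, 0)` and `(c₀,…,c₄) = (0, 1, 1, q-1, q)`. -/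
theorem AG_distance_regular (q : ℕ) (hq : IsPrimePow q) (hq3 : 3 ≤ q)
    (F : Type*) [Field F] [Fintype F] (hF : Fintype.card F = q) :
    ∀ u v : AGVertex F, ∀ i : Fin 5, (AGGraph F).dist u v = (i : ℕ) →
      Nat.card {w : AGVertex F |
          (AGGraph F).Adj v w ∧ (AGGraph F).dist u w = (i : ℕ) + 1} =
        ![q, q - 1, q - 1, 1, 0] i ∧
      Nat.card {w : AGVertex F |
          (AGGraph F).Adj v w ∧ (AGGraph F).dist u w = (i : ℕ) - 1} =
        ![0, 1, 1, q - 1, q] i := by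
  intro u v i h
  obtain p | l := u
  · obtain p' | l' := v
    · exact AG_main_pp q hF p p' i h
    · exact AG_main_pl q hF p l' i h
  · obtain p' | l' := v
    · exact AG_main_lp q hF l p' i h
    · exact AG_main_ll q hF l l' i h
end

section
/- The Paley graph P(13) on the field of 13 elements is 1-geodesic transitive but not 2-geodesic transitive: Aut(P(13)) acts transitively on the vertices and on the ordered pairs of adjacent vertices of P(13), but there exist two 2-geodesics of P(13) that are not mapped to one another by any automorphism of P(13). -/
open SimpleGraph

/-- The Paley graph on a finite field `F` with `|F| ≡ 1 (mod 4)`: distinct `u, v`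
are adjacent iff `u - v` is a (necessarily nonzero) square. -/
def paleyGraph (F : Type*) [Field F] [Fintype F] (h : Fintype.card F % 4 = 1) :
    SimpleGraph F where
  Adj u v := u ≠ v ∧ ∃ s : F, u - v = s ^ 2
  symm := ⟨by
    rintro u v ⟨huv, s, hs⟩
    refine ⟨huv.symm, ?_⟩
    obtain ⟨i, hi⟩ : IsSquare (-1 : F) :=
      (FiniteField.isSquare_neg_one_iff).2 (by omega)
    exact ⟨i * s, by linear_combination -hs + s ^ 2 * hi⟩⟩
  loopless := ⟨fun u h => h.1 rfl⟩

variable {V : Type*}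

/-- The automorphism group of a simple graph, as a subgroup of the permutation
group of the vertex set. -/
def SimpleGraph.autGroup (Γ : SimpleGraph V) : Subgroup (Equiv.Perm V) where
  carrier := {f | ∀ u v : V, Γ.Adj (f u) (f v) ↔ Γ.Adj u v}
  one_mem' := by intro u v; simp
  mul_mem' := by
    intro f g hf hg u v
    simp only [Equiv.Perm.mul_apply]
    rw [hf, hg]
  inv_mem' := by
    intro f hf u v
    have h := hf (f⁻¹ u) (f⁻¹ v)
    simpa using h.symm

instance : Fact (Nat.Prime 13) := ⟨by norm_num⟩

/-- The Paley graph `P(13)` on the field of `13` elements. -/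
def paley13 : SimpleGraph (ZMod 13) := paleyGraph (ZMod 13) (by rw [ZMod.card])

lemma paley13_adj_iff (u v : ZMod 13) :
    paley13.Adj u v ↔ u ≠ v ∧ ∃ s : ZMod 13, u - v = s ^ 2 := Iff.rfl

instance : DecidableRel paley13.Adj := fun u v =>
  decidable_of_iff (u ≠ v ∧ ∃ s : ZMod 13, u - v = s ^ 2) (paley13_adj_iff u v).symm

/-- The Paley graph `P(13)` is `1`-geodesic transitive but not
`2`-geodesic transitive: its automorphism group is transitive on vertices and on
ordered pairs of adjacent vertices, but some two `2`-geodesics are not equivalent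
under any automorphism. -/
theorem paley13_one_geodesic_transitive_not_two :
    (∀ u v : ZMod 13, ∃ g ∈ paley13.autGroup, g u = v) ∧
    (∀ u₀ u₁ v₀ v₁ : ZMod 13, paley13.Adj u₀ u₁ → paley13.Adj v₀ v₁ →
      ∃ g ∈ paley13.autGroup, g u₀ = v₀ ∧ g u₁ = v₁) ∧
    ∃ u₀ u₁ u₂ v₀ v₁ v₂ : ZMod 13,
      (paley13.Adj u₀ u₁ ∧ paley13.Adj u₁ u₂ ∧ paley13.dist u₀ u₂ = 2) ∧
      (paley13.Adj v₀ v₁ ∧ paley13.Adj v₁ v₂ ∧ paley13.dist v₀ v₂ = 2) ∧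
      ∀ g ∈ paley13.autGroup, ¬ (g u₀ = v₀ ∧ g u₁ = v₁ ∧ g u₂ = v₂) := by
  refine ⟨?_, ?_, ?_⟩
  · -- vertex transitivity via translations
    intro u v
    refine ⟨Equiv.addRight (v - u), ?_, by simp⟩
    intro x y
    simp only [Equiv.coe_addRight, paley13_adj_iff]
    constructor <;> rintro ⟨h1, s, hs⟩
    · exact ⟨fun he => h1 (by rw [he]), s, by linear_combination hs⟩
    · exact ⟨fun he => h1 (by exact add_right_cancel he), s, by linear_combination hs⟩
  · -- arc transitivity via affine maps with square ratio
    intro u₀ u₁ v₀ v₁ hu hv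
    obtain ⟨hneu, s, hs⟩ := hu
    obtain ⟨hnev, r, hr⟩ := hv
    have hs0 : s ≠ 0 := by
      rintro rfl; exact hneu (by linear_combination hs)
    have hr0 : r ≠ 0 := by
      rintro rfl; exact hnev (by linear_combination hr)
    set t : ZMod 13 := r / s with ht
    have ht0 : t ≠ 0 := div_ne_zero hr0 hs0
    set a : ZMod 13 := t ^ 2 with hadef
    have ha : a ≠ 0 := pow_ne_zero _ ht0
    have key : a * (u₀ - u₁) = v₀ - v₁ := by
      rw [hadef, ht, div_pow, div_mul_eq_mul_div, div_eq_iff (pow_ne_zero 2 hs0),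
        ← hs, ← hr]
    set b : ZMod 13 := v₀ - a * u₀ with hb
    have hmul : ∀ x : ZMod 13, (Equiv.mulLeft₀ a ha) x = a * x := fun _ => rfl
    refine ⟨(Equiv.mulLeft₀ a ha).trans (Equiv.addRight b), ?_, ?_, ?_⟩
    · intro x y
      simp only [Equiv.trans_apply, Equiv.coe_addRight, hmul, paley13_adj_iff]
      constructor <;> rintro ⟨h1, w, hw⟩
      · refine ⟨?_, w / t, ?_⟩
        · rintro rfl; exact h1 rfl
        · have hthis : t ^ 2 * (x - y) = w ^ 2 := by
            rw [hadef] at hw; linear_combination hw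
          rw [div_pow, eq_div_iff (pow_ne_zero 2 ht0)]
          linear_combination hthis
      · refine ⟨?_, t * w, by rw [hadef]; linear_combination a * hw⟩
        intro he
        exact h1 (mul_left_cancel₀ ha (by linear_combination he))
    · simp only [Equiv.trans_apply, Equiv.coe_addRight, hmul, hb]
      ring
    · simp only [Equiv.trans_apply, Equiv.coe_addRight, hmul, hb]
      linear_combination -key
  · -- two inequivalent 2-geodesics
    have hdist : paley13.dist (0 : ZMod 13) 2 = 2 := by
      have hadj01 : paley13.Adj 0 1 := by decide
      have hadj12 : paley13.Adj 1 2 := by decide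
      have hw : paley13.dist (0 : ZMod 13) 2 ≤ 2 := by
        have := SimpleGraph.dist_le (SimpleGraph.Walk.cons hadj01
          (SimpleGraph.Walk.cons hadj12 SimpleGraph.Walk.nil))
        simpa using this
      have hne1 : paley13.dist (0 : ZMod 13) 2 ≠ 1 := fun h =>
        (by decide : ¬ paley13.Adj 0 2) (SimpleGraph.dist_eq_one_iff_adj.mp h)
      have hpos : 0 < paley13.dist (0 : ZMod 13) 2 := by
        refine SimpleGraph.Reachable.pos_dist_of_ne ?_ (by decide)
        exact ⟨SimpleGraph.Walk.cons hadj01 (SimpleGraph.Walk.cons hadj12 SimpleGraph.Walk.nil)⟩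
      omega
    refine ⟨0, 1, 2, 0, 3, 2, ⟨by decide, by decide, hdist⟩, ⟨by decide, by decide, hdist⟩, ?_⟩
    rintro g hg ⟨h0, h1, h2⟩
    have key : ∀ w : ZMod 13, ¬ (paley13.Adj w 0 ∧ paley13.Adj w 1 ∧ paley13.Adj w 2) := by
      decide
    refine key (g⁻¹ 12) ⟨?_, ?_, ?_⟩
    · have := hg (g⁻¹ 12) 0
      rw [show g (g⁻¹ 12) = 12 from g.apply_symm_apply 12, h0] at this
      exact this.mp (by decide)
    · have := hg (g⁻¹ 12) 1
      rw [show g (g⁻¹ 12) = 12 from g.apply_symm_apply 12, h1] at this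
      exact this.mp (by decide)
    · have := hg (g⁻¹ 12) 2
      rw [show g (g⁻¹ 12) = 12 from g.apply_symm_apply 12, h2] at this
      exact this.mp (by decide)
end

section
/- The Paley graph P(25) on the field of 25 elements is 1-geodesic transitive but not 2-geodesic transitive: Aut(P(25)) acts transitively on the vertices and on the ordered pairs of adjacent vertices of P(25), but there exist two 2-geodesics of P(25) that are not mapped to one another by any automorphism of P(25). -/
open SimpleGraph

variable {V : Type*}

section Aux

variable {F : Type*} [Field F] [Fintype F]

/-- The affine permutation `x ↦ a * x + b` of a field, for `a ≠ 0`. -/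
def affPerm (a b : F) (ha : a ≠ 0) : Equiv.Perm F where
  toFun x := a * x + b
  invFun y := a⁻¹ * (y - b)
  left_inv x := by field_simp; ring
  right_inv y := by field_simp; ring

lemma affPerm_mem (h4 : Fintype.card F % 4 = 1) (a b t : F) (ha : a ≠ 0)
    (ht : a = t ^ 2) : affPerm a b ha ∈ (paleyGraph F h4).autGroup := by
  have htne : t ≠ 0 := by
    rintro rfl
    rw [ht] at ha
    simp at ha
  intro u v
  show ((a * u + b ≠ a * v + b) ∧ ∃ z : F, (a * u + b) - (a * v + b) = z ^ 2) ↔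
    (u ≠ v ∧ ∃ z : F, u - v = z ^ 2)
  constructor
  · rintro ⟨hne, z, hz⟩
    refine ⟨fun h => hne (by rw [h]), t⁻¹ * z, ?_⟩
    have h1 : t ^ 2 * (u - v) = z ^ 2 := by linear_combination hz - (u - v) * ht
    have h2 : (t⁻¹ * z) ^ 2 = u - v := by
      rw [mul_pow, ← h1, inv_pow, inv_mul_cancel_left₀ (pow_ne_zero 2 htne)]
    exact h2.symm
  · rintro ⟨hne, z, hz⟩
    refine ⟨fun h => hne (by
      have := mul_left_cancel₀ ha (add_right_cancel h)
      exact this), t * z, ?_⟩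
    linear_combination a * hz + z ^ 2 * ht

end Aux

/-- The Paley graph `P(25)` on the field `GF(25)` of `25` elements
is `1`-geodesic transitive but not `2`-geodesic transitive: its automorphism group is
transitive on vertices and on ordered pairs of adjacent vertices, but some two
`2`-geodesics are not equivalent under any automorphism. -/
theorem paley25_one_geodesic_transitive_not_two
    (F : Type*) [Field F] [Fintype F] (hF : Fintype.card F = 25)
    (h4 : Fintype.card F % 4 = 1) :
    (∀ u v : F, ∃ g ∈ (paleyGraph F h4).autGroup, g u = v) ∧
    (∀ u₀ u₁ v₀ v₁ : F, (paleyGraph F h4).Adj u₀ u₁ → (paleyGraph F h4).Adj v₀ v₁ →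
      ∃ g ∈ (paleyGraph F h4).autGroup, g u₀ = v₀ ∧ g u₁ = v₁) ∧
    ∃ u₀ u₁ u₂ v₀ v₁ v₂ : F,
      ((paleyGraph F h4).Adj u₀ u₁ ∧ (paleyGraph F h4).Adj u₁ u₂ ∧
        (paleyGraph F h4).dist u₀ u₂ = 2) ∧
      ((paleyGraph F h4).Adj v₀ v₁ ∧ (paleyGraph F h4).Adj v₁ v₂ ∧
        (paleyGraph F h4).dist v₀ v₂ = 2) ∧
      ∀ g ∈ (paleyGraph F h4).autGroup, ¬ (g u₀ = v₀ ∧ g u₁ = v₁ ∧ g u₂ = v₂) := by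
  classical
  refine ⟨?_, ?_, ?_⟩
  · -- vertex transitivity via translations
    intro u v
    refine ⟨affPerm 1 (v - u) one_ne_zero, affPerm_mem h4 1 (v - u) 1 one_ne_zero (by ring), ?_⟩
    show 1 * u + (v - u) = v
    ring
  · -- arc transitivity
    rintro u₀ u₁ v₀ v₁ hu hv
    obtain ⟨hune, p, hp⟩ := (paleyGraph F h4).symm.symm _ _ hu
    obtain ⟨hvne, q, hq⟩ := (paleyGraph F h4).symm.symm _ _ hv
    have hpne : p ≠ 0 := by
      rintro rfl
      apply hune
      apply sub_eq_zero.mp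
      rw [hp]; ring
    have hqne : q ≠ 0 := by
      rintro rfl
      apply hvne
      apply sub_eq_zero.mp
      rw [hq]; ring
    set a : F := (q * p⁻¹) ^ 2 with haa
    have hane : a ≠ 0 := pow_ne_zero 2 (mul_ne_zero hqne (inv_ne_zero hpne))
    refine ⟨affPerm a (v₀ - a * u₀) hane, affPerm_mem h4 a _ (q * p⁻¹) hane rfl, ?_, ?_⟩
    · show a * u₀ + (v₀ - a * u₀) = v₀
      ring
    · show a * u₁ + (v₀ - a * u₀) = v₁
      have : a * (u₁ - u₀) = v₁ - v₀ := by
        rw [haa]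
        field_simp
        linear_combination q ^ 2 * hp - p ^ 2 * hq
      linear_combination this
  · -- not 2-geodesic transitive
    set Γ := paleyGraph F h4 with hΓ
    -- characteristic 5
    haveI := ringChar.charP F
    obtain ⟨n, hp, hcard⟩ := FiniteField.card F (ringChar F)
    have hchar : ringChar F = 5 := by
      have hdvd : ringChar F ∣ 5 ^ 2 := by
        have : ringChar F ∣ Fintype.card F := by
          rw [hcard]
          exact dvd_pow_self _ n.pos.ne'
        rwa [hF, show (25 : ℕ) = 5 ^ 2 by norm_num] at this
      exact (Nat.prime_dvd_prime_iff_eq hp (by norm_num)).mp (hp.dvd_of_dvd_pow hdvd)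
    haveI hchar5 : CharP F 5 := hchar ▸ ringChar.charP F
    have h5 : (5 : F) = 0 := by exact_mod_cast CharP.cast_eq_zero F 5
    have h2ne : (2 : F) ≠ 0 := by
      intro h
      have := (CharP.cast_eq_zero_iff F 5 2).mp (by exact_mod_cast h)
      omega
    have hsq2 : IsSquare (2 : F) := by
      rw [FiniteField.isSquare_iff (by rw [hchar]; norm_num) h2ne, hF]
      norm_num
      linear_combination (819 : F) * h5
    obtain ⟨s, hs⟩ := hsq2
    have hs2 : s ^ 2 = 2 := by rw [sq]; exact hs.symm
    set φ : ZMod 5 →+* F := ZMod.castHom (dvd_refl 5) F with hφ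
    have hφinj : Function.Injective φ := ZMod.castHom_injective F
    set f : ZMod 5 × ZMod 5 → F := fun p => φ p.1 + φ p.2 * s with hf
    have hsnot : ∀ z : ZMod 5, s ≠ φ z := by
      intro z h
      have hz2 : ∀ z : ZMod 5, z ^ 2 ≠ 2 := by decide
      apply hz2 z
      apply hφinj
      rw [map_pow, ← h, hs2, map_ofNat]
    have hfinj : Function.Injective f := by
      rintro ⟨a, b⟩ ⟨c, d⟩ h
      simp only [hf] at h
      by_cases hbd : b = d
      · subst hbd
        have : φ a = φ c := by
          have := add_right_cancel (a := φ a) (b := φ b * s) (c := φ c) h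
          exact this
        exact Prod.ext (hφinj this) rfl
      · exfalso
        have hdb : (d - b : ZMod 5) ≠ 0 := sub_ne_zero.mpr (Ne.symm hbd)
        have hφdb : φ d - φ b ≠ 0 := by
          rw [← map_sub]
          exact fun hh => hdb (hφinj (by rw [hh, map_zero]))
        have key : s * (φ d - φ b) = φ a - φ c := by linear_combination -h
        have hcancel : ∀ y : ZMod 5, y ≠ 0 → ∃ e : ZMod 5, e * y = 1 := by decide
        obtain ⟨e, he⟩ := hcancel _ hdb
        apply hsnot ((a - c) * e)
        have hz : ((a - c) * e) * (d - b) = a - c := by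
          linear_combination (a - c) * he
        apply mul_right_cancel₀ hφdb
        rw [key, ← map_sub, ← map_sub, ← map_mul, hz]
    have hfbij : Function.Bijective f :=
      (Fintype.bijective_iff_injective_and_card f).mpr
        ⟨hfinj, by simp [hF]⟩
    have hfsub : ∀ p q, f p - f q = f (p - q) := by
      intro p q
      simp only [hf, Prod.fst_sub, Prod.snd_sub, map_sub]
      ring
    set Sq : Finset (ZMod 5 × ZMod 5) :=
      Finset.image (fun q : ZMod 5 × ZMod 5 => (q.1 ^ 2 + 2 * q.2 ^ 2, 2 * q.1 * q.2))
        Finset.univ with hSqdef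
    have hsqf : ∀ q : ZMod 5 × ZMod 5,
        f (q.1 ^ 2 + 2 * q.2 ^ 2, 2 * q.1 * q.2) = (f q) ^ 2 := by
      intro q
      simp only [hf, map_add, map_mul, map_pow, map_ofNat]
      linear_combination - (φ q.2) ^ 2 * hs2
    have hSq : ∀ p : ZMod 5 × ZMod 5, (∃ z : F, f p = z ^ 2) ↔ p ∈ Sq := by
      intro p
      constructor
      · rintro ⟨z, hz⟩
        obtain ⟨q, rfl⟩ := hfbij.surjective z
        rw [← hsqf q] at hz
        exact Finset.mem_image.mpr ⟨q, Finset.mem_univ q, (hfinj hz).symm⟩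
      · intro hmem
        obtain ⟨q, -, rfl⟩ := Finset.mem_image.mp hmem
        exact ⟨f q, hsqf q⟩
    have hadj : ∀ p q : ZMod 5 × ZMod 5,
        Γ.Adj (f p) (f q) ↔ (p ≠ q ∧ (p - q) ∈ Sq) := by
      intro p q
      show (f p ≠ f q ∧ ∃ z : F, f p - f q = z ^ 2) ↔ _
      rw [hfsub, hSq, hfinj.ne_iff]
    -- the counting invariant
    have hinv : ∀ g ∈ Γ.autGroup, ∀ u₀ u₁ u₂ : F,
        {w : F | Γ.Adj w u₀ ∧ Γ.Adj w u₁ ∧ Γ.Adj w u₂}.ncard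
          = {w : F | Γ.Adj w (g u₀) ∧ Γ.Adj w (g u₁) ∧ Γ.Adj w (g u₂)}.ncard := by
      intro g hg u₀ u₁ u₂
      have hg' : ∀ u v : F, Γ.Adj (g u) (g v) ↔ Γ.Adj u v := hg
      have himg : (g : F → F) '' {w : F | Γ.Adj w u₀ ∧ Γ.Adj w u₁ ∧ Γ.Adj w u₂}
          = {w : F | Γ.Adj w (g u₀) ∧ Γ.Adj w (g u₁) ∧ Γ.Adj w (g u₂)} := by
        ext w
        simp only [Set.mem_image, Set.mem_setOf_eq]
        constructor
        · rintro ⟨x, ⟨h0, h1, h2⟩, rfl⟩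
          exact ⟨(hg' x u₀).mpr h0, (hg' x u₁).mpr h1, (hg' x u₂).mpr h2⟩
        · rintro ⟨h0, h1, h2⟩
          refine ⟨g⁻¹ w, ⟨?_, ?_, ?_⟩, by rw [← Equiv.Perm.mul_apply, mul_inv_cancel, Equiv.Perm.one_apply]⟩
          · rw [← hg' (g⁻¹ w) u₀] at *; rwa [← Equiv.Perm.mul_apply, mul_inv_cancel, Equiv.Perm.one_apply]
          · rw [← hg' (g⁻¹ w) u₁] at *; rwa [← Equiv.Perm.mul_apply, mul_inv_cancel, Equiv.Perm.one_apply]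
          · rw [← hg' (g⁻¹ w) u₂] at *; rwa [← Equiv.Perm.mul_apply, mul_inv_cancel, Equiv.Perm.one_apply]
      rw [← himg, Set.ncard_image_of_injective _ g.injective]
    -- computing the counts in coordinates
    have hcount : ∀ p₀ p₁ p₂ : ZMod 5 × ZMod 5,
        {w : F | Γ.Adj w (f p₀) ∧ Γ.Adj w (f p₁) ∧ Γ.Adj w (f p₂)}.ncard
          = (Finset.univ.filter (fun q : ZMod 5 × ZMod 5 =>
              (q ≠ p₀ ∧ q - p₀ ∈ Sq) ∧ (q ≠ p₁ ∧ q - p₁ ∈ Sq) ∧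
              (q ≠ p₂ ∧ q - p₂ ∈ Sq))).card := by
      intro p₀ p₁ p₂
      have himg : {w : F | Γ.Adj w (f p₀) ∧ Γ.Adj w (f p₁) ∧ Γ.Adj w (f p₂)}
          = f '' {q : ZMod 5 × ZMod 5 |
              (q ≠ p₀ ∧ q - p₀ ∈ Sq) ∧ (q ≠ p₁ ∧ q - p₁ ∈ Sq) ∧ (q ≠ p₂ ∧ q - p₂ ∈ Sq)} := by
        ext w
        simp only [Set.mem_image, Set.mem_setOf_eq]
        constructor
        · intro h
          obtain ⟨q, rfl⟩ := hfbij.surjective w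
          exact ⟨q, ⟨(hadj q p₀).mp h.1, (hadj q p₁).mp h.2.1, (hadj q p₂).mp h.2.2⟩, rfl⟩
        · rintro ⟨q, hq, rfl⟩
          exact ⟨(hadj q p₀).mpr hq.1, (hadj q p₁).mpr hq.2.1, (hadj q p₂).mpr hq.2.2⟩
      rw [himg, Set.ncard_image_of_injective _ hfinj]
      rw [show {q : ZMod 5 × ZMod 5 |
              (q ≠ p₀ ∧ q - p₀ ∈ Sq) ∧ (q ≠ p₁ ∧ q - p₁ ∈ Sq) ∧ (q ≠ p₂ ∧ q - p₂ ∈ Sq)}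
          = ↑(Finset.univ.filter (fun q : ZMod 5 × ZMod 5 =>
              (q ≠ p₀ ∧ q - p₀ ∈ Sq) ∧ (q ≠ p₁ ∧ q - p₁ ∈ Sq) ∧ (q ≠ p₂ ∧ q - p₂ ∈ Sq)))
        from by ext q; simp]
      rw [Set.ncard_coe_finset]
    -- the witnesses
    refine ⟨f (0, 0), f (1, 0), f (0, 1), f (0, 0), f (1, 0), f (4, 2), ?_, ?_, ?_⟩
    · refine ⟨(hadj _ _).mpr (by decide), (hadj _ _).mpr (by decide), ?_⟩
      have hne : f (0, 0) ≠ f (0, 1) := hfinj.ne (by decide)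
      have hnadj : ¬ Γ.Adj (f (0, 0)) (f (0, 1)) := by
        rw [hadj]
        decide
      have h01 : Γ.Adj (f (0, 0)) (f (1, 0)) := (hadj _ _).mpr (by decide)
      have h12 : Γ.Adj (f (1, 0)) (f (0, 1)) := (hadj _ _).mpr (by decide)
      have hle : Γ.dist (f (0, 0)) (f (0, 1)) ≤ 2 := by
        simpa using Γ.dist_le (Walk.cons h01 (Walk.cons h12 Walk.nil))
      have hr : Γ.Reachable (f (0, 0)) (f (0, 1)) :=
        ⟨Walk.cons h01 (Walk.cons h12 Walk.nil)⟩
      have h0 : Γ.dist (f (0, 0)) (f (0, 1)) ≠ 0 :=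
        fun h => hne (hr.dist_eq_zero_iff.mp h)
      have h1 : Γ.dist (f (0, 0)) (f (0, 1)) ≠ 1 :=
        fun h => hnadj (SimpleGraph.dist_eq_one_iff_adj.mp h)
      omega
    · refine ⟨(hadj _ _).mpr (by decide), (hadj _ _).mpr (by decide), ?_⟩
      have hne : f (0, 0) ≠ f (4, 2) := hfinj.ne (by decide)
      have hnadj : ¬ Γ.Adj (f (0, 0)) (f (4, 2)) := by
        rw [hadj]
        decide
      have h01 : Γ.Adj (f (0, 0)) (f (1, 0)) := (hadj _ _).mpr (by decide)
      have h12 : Γ.Adj (f (1, 0)) (f (4, 2)) := (hadj _ _).mpr (by decide)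
      have hle : Γ.dist (f (0, 0)) (f (4, 2)) ≤ 2 := by
        simpa using Γ.dist_le (Walk.cons h01 (Walk.cons h12 Walk.nil))
      have hr : Γ.Reachable (f (0, 0)) (f (4, 2)) :=
        ⟨Walk.cons h01 (Walk.cons h12 Walk.nil)⟩
      have h0 : Γ.dist (f (0, 0)) (f (4, 2)) ≠ 0 :=
        fun h => hne (hr.dist_eq_zero_iff.mp h)
      have h1 : Γ.dist (f (0, 0)) (f (4, 2)) ≠ 1 :=
        fun h => hnadj (SimpleGraph.dist_eq_one_iff_adj.mp h)
      omega
    · rintro g hg ⟨h0, h1, h2⟩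
      have key := hinv g hg (f (0, 0)) (f (1, 0)) (f (0, 1))
      rw [h0, h1, h2] at key
      rw [hcount, hcount] at key
      revert key
      decide
end

section
/- Let G = ⟨a,b | a^{11} = b^2 = 1, bab^{-1} = a^{-1}⟩ be the dihedral group of order 22 and let S = {b, a^2 b, a^6 b, a^7 b, a^8 b, a^{10} b}. Then the Cayley graph Cay(G,S) (the graph 𝒢_{22,6}) is 2-geodesic transitive but not 3-geodesic transitive: Aut(Cay(G,S)) acts transitively on the set of i-geodesics of Cay(G,S) for i = 1 and i = 2, but not on the set of 3-geodesics. -/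
open SimpleGraph DihedralGroup

/-- The generator `a = r 1` of rotations in the dihedral group of order 22. -/
def dihA : DihedralGroup 11 := DihedralGroup.r 1

/-- The reflection `b = sr 0` in the dihedral group of order 22. -/
def dihB : DihedralGroup 11 := DihedralGroup.sr 0

/-- The connection set `S = {b, a²b, a⁶b, a⁷b, a⁸b, a¹⁰b}`. -/
def g226S : Finset (DihedralGroup 11) :=
  {dihB, dihA ^ 2 * dihB, dihA ^ 6 * dihB, dihA ^ 7 * dihB, dihA ^ 8 * dihB,
    dihA ^ 10 * dihB}

/-- The graph `𝒢_{22,6}`: the Cayley graph `Cay(G, S)` of the dihedral group `G` of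
order `22` with respect to `S = {b, a²b, a⁶b, a⁷b, a⁸b, a¹⁰b}`. -/
def g226 : SimpleGraph (DihedralGroup 11) where
  Adj x y := y * x⁻¹ ∈ g226S
  symm := by
    have h : ∀ x y : DihedralGroup 11, y * x⁻¹ ∈ g226S → x * y⁻¹ ∈ g226S := by decide
    exact ⟨fun x y hxy => h x y hxy⟩
  loopless := by
    have h : ∀ x : DihedralGroup 11, ¬ x * x⁻¹ ∈ g226S := by decide
    exact ⟨h⟩

variable {V : Type*}

/-- An `s`-geodesic of a graph: a sequence of `s+1` vertices, consecutively
adjacent, whose endpoints are at distance `s`. -/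
def SimpleGraph.IsNGeodesic (Γ : SimpleGraph V) (s : ℕ) (u : Fin (s + 1) → V) : Prop :=
  (∀ i : Fin s, Γ.Adj (u i.castSucc) (u i.succ)) ∧ Γ.dist (u 0) (u (Fin.last s)) = s

/-- `(G,s)`-geodesic transitivity: `G` is transitive on vertices and, for each
`1 ≤ i ≤ s`, the graph has an `i`-geodesic and `G` is transitive on `i`-geodesics. -/
def SimpleGraph.GeodesicTransitiveOn (Γ : SimpleGraph V) (G : Subgroup (Equiv.Perm V))
    (s : ℕ) : Prop :=
  (∀ u v : V, ∃ g ∈ G, g u = v) ∧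
  ∀ i : ℕ, 1 ≤ i → i ≤ s →
    (∃ u : Fin (i + 1) → V, Γ.IsNGeodesic i u) ∧
    ∀ u w : Fin (i + 1) → V, Γ.IsNGeodesic i u → Γ.IsNGeodesic i w →
      ∃ g ∈ G, ∀ j, g (u j) = w j


-- ------------------- auxiliary machinery -------------------

instance g226.adjDec : DecidableRel g226.Adj := fun x y =>
  inferInstanceAs (Decidable (y * x⁻¹ ∈ g226S))

/-- Build a function on the dihedral group from lookup tables. -/
def mkFun (a b : List (ZMod 11)) : DihedralGroup 11 → DihedralGroup 11
  | DihedralGroup.r i => DihedralGroup.r (a.getD i.val 0)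
  | DihedralGroup.sr j => DihedralGroup.sr (b.getD j.val 0)

/-- Build a permutation of the dihedral group from lookup tables. -/
def mkPerm (a b ai bi : List (ZMod 11))
    (h1 : ∀ x, mkFun ai bi (mkFun a b x) = x)
    (h2 : ∀ x, mkFun a b (mkFun ai bi x) = x) : Equiv.Perm (DihedralGroup 11) :=
  ⟨mkFun a b, mkFun ai bi, h1, h2⟩

/-- fast adjacency test for `g226`. -/
def adjB : DihedralGroup 11 → DihedralGroup 11 → Bool
  | DihedralGroup.r i, DihedralGroup.sr j => decide (j - i ∈ ([0, 1, 3, 4, 5, 9] : List (ZMod 11)))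
  | DihedralGroup.sr j, DihedralGroup.r i => decide (j - i ∈ ([0, 1, 3, 4, 5, 9] : List (ZMod 11)))
  | _, _ => false

lemma adjB_iff : ∀ x y, g226.Adj x y ↔ adjB x y = true := by decide

def h0 : Equiv.Perm (DihedralGroup 11) :=
  mkPerm [0, 1, 2, 3, 4, 5, 6, 7, 8, 9, 10] [0, 1, 2, 3, 4, 5, 6, 7, 8, 9, 10] [0, 1, 2, 3, 4, 5, 6, 7, 8, 9, 10] [0, 1, 2, 3, 4, 5, 6, 7, 8, 9, 10] (by decide) (by decide)

def h1 : Equiv.Perm (DihedralGroup 11) :=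
  mkPerm [0, 9, 6, 3, 5, 4, 2, 8, 7, 1, 10] [0, 1, 10, 4, 3, 9, 7, 6, 8, 5, 2] [0, 9, 6, 3, 5, 4, 2, 8, 7, 1, 10] [0, 1, 10, 4, 3, 9, 7, 6, 8, 5, 2] (by decide) (by decide)

def h2 : Equiv.Perm (DihedralGroup 11) :=
  mkPerm [0, 5, 10, 4, 9, 3, 8, 2, 7, 1, 6] [0, 5, 10, 4, 9, 3, 8, 2, 7, 1, 6] [0, 9, 7, 5, 3, 1, 10, 8, 6, 4, 2] [0, 9, 7, 5, 3, 1, 10, 8, 6, 4, 2] (by decide) (by decide)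

def h3 : Equiv.Perm (DihedralGroup 11) :=
  mkPerm [0, 1, 8, 4, 3, 9, 10, 7, 2, 5, 6] [0, 5, 6, 9, 4, 1, 2, 8, 7, 3, 10] [0, 1, 8, 4, 3, 9, 10, 7, 2, 5, 6] [0, 5, 6, 9, 4, 1, 2, 8, 7, 3, 10] (by decide) (by decide)

def h4 : Equiv.Perm (DihedralGroup 11) :=
  mkPerm [0, 9, 7, 5, 3, 1, 10, 8, 6, 4, 2] [0, 9, 7, 5, 3, 1, 10, 8, 6, 4, 2] [0, 5, 10, 4, 9, 3, 8, 2, 7, 1, 6] [0, 5, 10, 4, 9, 3, 8, 2, 7, 1, 6] (by decide) (by decide)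

def h5 : Equiv.Perm (DihedralGroup 11) :=
  mkPerm [0, 2, 1, 10, 5, 4, 9, 7, 8, 6, 3] [1, 0, 6, 4, 3, 5, 2, 10, 8, 9, 7] [0, 2, 1, 10, 5, 4, 9, 7, 8, 6, 3] [1, 0, 6, 4, 3, 5, 2, 10, 8, 9, 7] (by decide) (by decide)

def h6 : Equiv.Perm (DihedralGroup 11) :=
  mkPerm [0, 10, 4, 2, 3, 1, 9, 6, 8, 7, 5] [9, 0, 8, 5, 3, 4, 2, 7, 6, 1, 10] [0, 5, 3, 4, 2, 10, 7, 9, 8, 6, 1] [1, 9, 6, 4, 5, 3, 8, 7, 2, 0, 10] (by decide) (by decide)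

def h7 : Equiv.Perm (DihedralGroup 11) :=
  mkPerm [0, 10, 5, 6, 3, 9, 1, 2, 7, 8, 4] [5, 0, 8, 9, 4, 3, 10, 6, 7, 1, 2] [0, 6, 7, 4, 10, 2, 3, 8, 9, 5, 1] [1, 9, 10, 5, 4, 0, 7, 8, 2, 3, 6] (by decide) (by decide)

def h8 : Equiv.Perm (DihedralGroup 11) :=
  mkPerm [0, 8, 1, 6, 9, 3, 5, 7, 2, 10, 4] [5, 0, 2, 4, 9, 1, 6, 10, 7, 3, 8] [0, 2, 8, 5, 10, 6, 3, 7, 1, 4, 9] [1, 5, 2, 9, 3, 0, 6, 8, 10, 4, 7] (by decide) (by decide)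

def h9 : Equiv.Perm (DihedralGroup 11) :=
  mkPerm [0, 6, 9, 10, 4, 5, 1, 8, 7, 2, 3] [1, 0, 7, 3, 4, 9, 10, 2, 8, 5, 6] [0, 6, 9, 10, 4, 5, 1, 8, 7, 2, 3] [1, 0, 7, 3, 4, 9, 10, 2, 8, 5, 6] (by decide) (by decide)

def h10 : Equiv.Perm (DihedralGroup 11) :=
  mkPerm [0, 9, 2, 8, 3, 10, 1, 5, 4, 6, 7] [5, 9, 7, 0, 1, 3, 2, 6, 8, 4, 10] [0, 6, 2, 4, 8, 7, 9, 10, 3, 1, 5] [3, 4, 6, 5, 9, 0, 7, 2, 8, 1, 10] (by decide) (by decide)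

def h11 : Equiv.Perm (DihedralGroup 11) :=
  mkPerm [0, 5, 8, 2, 4, 6, 1, 9, 3, 10, 7] [1, 3, 8, 0, 5, 9, 6, 2, 7, 4, 10] [0, 6, 3, 8, 4, 1, 5, 10, 2, 7, 9] [3, 0, 7, 1, 9, 4, 6, 8, 2, 5, 10] (by decide) (by decide)

def h12 : Equiv.Perm (DihedralGroup 11) :=
  mkPerm [0, 4, 7, 6, 5, 2, 9, 1, 3, 10, 8] [1, 4, 8, 0, 9, 5, 7, 10, 6, 3, 2] [0, 7, 5, 8, 1, 4, 3, 2, 10, 6, 9] [3, 0, 10, 9, 1, 5, 8, 6, 2, 4, 7] (by decide) (by decide)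

def h13 : Equiv.Perm (DihedralGroup 11) :=
  mkPerm [0, 1, 6, 7, 3, 10, 9, 4, 5, 2, 8] [9, 5, 6, 0, 1, 4, 10, 7, 8, 3, 2] [0, 1, 9, 4, 7, 8, 2, 3, 10, 6, 5] [3, 4, 10, 9, 5, 1, 2, 7, 8, 0, 6] (by decide) (by decide)

def h14 : Equiv.Perm (DihedralGroup 11) :=
  mkPerm [0, 3, 7, 10, 9, 8, 5, 1, 4, 6, 2] [5, 4, 7, 0, 3, 1, 8, 10, 2, 9, 6] [0, 7, 10, 1, 8, 6, 9, 2, 5, 4, 3] [3, 5, 8, 4, 1, 0, 10, 2, 6, 9, 7] (by decide) (by decide)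

def h15 : Equiv.Perm (DihedralGroup 11) :=
  mkPerm [0, 2, 9, 7, 10, 3, 6, 5, 4, 1, 8] [9, 5, 2, 1, 0, 3, 7, 10, 8, 4, 6] [0, 9, 1, 5, 8, 7, 6, 3, 10, 2, 4] [4, 3, 2, 5, 9, 1, 10, 6, 8, 0, 7] (by decide) (by decide)

def h16 : Equiv.Perm (DihedralGroup 11) :=
  mkPerm [0, 10, 1, 2, 6, 4, 8, 3, 9, 5, 7] [1, 3, 10, 5, 0, 4, 2, 6, 7, 9, 8] [0, 2, 3, 7, 5, 9, 4, 10, 6, 8, 1] [4, 0, 6, 1, 5, 3, 7, 8, 10, 9, 2] (by decide) (by decide)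

def h17 : Equiv.Perm (DihedralGroup 11) :=
  mkPerm [0, 10, 9, 6, 2, 5, 7, 3, 1, 4, 8] [1, 4, 2, 9, 0, 3, 10, 7, 6, 5, 8] [0, 8, 4, 7, 9, 5, 3, 6, 10, 2, 1] [4, 0, 2, 5, 1, 9, 8, 7, 10, 3, 6] (by decide) (by decide)

def h18 : Equiv.Perm (DihedralGroup 11) :=
  mkPerm [0, 6, 1, 8, 10, 3, 2, 4, 5, 9, 7] [5, 9, 10, 1, 0, 4, 6, 2, 8, 3, 7] [0, 2, 6, 5, 7, 8, 1, 10, 3, 9, 4] [4, 3, 7, 9, 5, 0, 6, 10, 8, 1, 2] (by decide) (by decide)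

def h19 : Equiv.Perm (DihedralGroup 11) :=
  mkPerm [0, 6, 5, 10, 8, 9, 7, 4, 1, 3, 2] [5, 4, 6, 3, 0, 9, 10, 8, 2, 1, 7] [0, 8, 10, 9, 7, 2, 1, 6, 4, 5, 3] [4, 9, 8, 3, 1, 0, 2, 10, 7, 5, 6] (by decide) (by decide)

def h20 : Equiv.Perm (DihedralGroup 11) :=
  mkPerm [0, 2, 8, 5, 10, 6, 3, 7, 1, 4, 9] [1, 5, 2, 9, 3, 0, 6, 8, 10, 4, 7] [0, 8, 1, 6, 9, 3, 5, 7, 2, 10, 4] [5, 0, 2, 4, 9, 1, 6, 10, 7, 3, 8] (by decide) (by decide)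

def h21 : Equiv.Perm (DihedralGroup 11) :=
  mkPerm [0, 8, 2, 9, 6, 10, 4, 7, 1, 3, 5] [5, 1, 6, 3, 9, 0, 2, 7, 10, 4, 8] [0, 8, 2, 9, 6, 10, 4, 7, 1, 3, 5] [5, 1, 6, 3, 9, 0, 2, 7, 10, 4, 8] (by decide) (by decide)

def h22 : Equiv.Perm (DihedralGroup 11) :=
  mkPerm [0, 7, 6, 1, 2, 10, 5, 8, 9, 3, 4] [9, 1, 7, 4, 5, 0, 10, 6, 2, 3, 8] [0, 3, 4, 9, 10, 6, 2, 1, 7, 8, 5] [5, 1, 8, 9, 3, 4, 7, 2, 10, 0, 6] (by decide) (by decide)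

def h23 : Equiv.Perm (DihedralGroup 11) :=
  mkPerm [0, 6, 7, 4, 10, 2, 3, 8, 9, 5, 1] [1, 9, 10, 5, 4, 0, 7, 8, 2, 3, 6] [0, 10, 5, 6, 3, 9, 1, 2, 7, 8, 4] [5, 0, 8, 9, 4, 3, 10, 6, 7, 1, 2] (by decide) (by decide)

def h24 : Equiv.Perm (DihedralGroup 11) :=
  mkPerm [0, 10, 7, 3, 6, 8, 4, 2, 5, 9, 1] [5, 3, 10, 1, 4, 0, 8, 7, 6, 9, 2] [0, 10, 7, 3, 6, 8, 4, 2, 5, 9, 1] [5, 3, 10, 1, 4, 0, 8, 7, 6, 9, 2] (by decide) (by decide)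

def h25 : Equiv.Perm (DihedralGroup 11) :=
  mkPerm [0, 5, 3, 4, 2, 10, 7, 9, 8, 6, 1] [1, 9, 6, 4, 5, 3, 8, 7, 2, 0, 10] [0, 10, 4, 2, 3, 1, 9, 6, 8, 7, 5] [9, 0, 8, 5, 3, 4, 2, 7, 6, 1, 10] (by decide) (by decide)

def h26 : Equiv.Perm (DihedralGroup 11) :=
  mkPerm [0, 3, 5, 1, 10, 2, 6, 9, 8, 7, 4] [9, 1, 8, 5, 4, 3, 6, 10, 2, 0, 7] [0, 3, 5, 1, 10, 2, 6, 9, 8, 7, 4] [9, 1, 8, 5, 4, 3, 6, 10, 2, 0, 7] (by decide) (by decide)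

def h27 : Equiv.Perm (DihedralGroup 11) :=
  mkPerm [0, 3, 4, 9, 10, 6, 2, 1, 7, 8, 5] [5, 1, 8, 9, 3, 4, 7, 2, 10, 0, 6] [0, 7, 6, 1, 2, 10, 5, 8, 9, 3, 4] [9, 1, 7, 4, 5, 0, 10, 6, 2, 3, 8] (by decide) (by decide)

def h28 : Equiv.Perm (DihedralGroup 11) :=
  mkPerm [0, 9, 4, 3, 8, 6, 7, 5, 2, 10, 1] [5, 3, 2, 4, 1, 9, 7, 8, 6, 0, 10] [0, 10, 8, 3, 2, 7, 5, 6, 4, 1, 9] [9, 4, 2, 1, 3, 0, 8, 6, 7, 5, 10] (by decide) (by decide)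

def h29 : Equiv.Perm (DihedralGroup 11) :=
  mkPerm [0, 4, 3, 5, 6, 10, 8, 1, 7, 2, 9] [1, 5, 7, 3, 9, 4, 8, 6, 10, 0, 2] [0, 7, 9, 2, 1, 3, 4, 8, 6, 10, 5] [9, 0, 10, 3, 5, 1, 7, 2, 6, 4, 8] (by decide) (by decide)

def Lperms : List (Equiv.Perm (DihedralGroup 11)) :=
  [h0, h1, h2, h3, h4, h5, h6, h7, h8, h9, h10, h11, h12, h13, h14, h15, h16, h17, h18, h19, h20, h21, h22, h23, h24, h25, h26, h27, h28, h29]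


def allD : List (DihedralGroup 11) :=
  ((List.range 11).map fun k => DihedralGroup.r (k : ZMod 11)) ++
    ((List.range 11).map fun k => DihedralGroup.sr (k : ZMod 11))

lemma allD_mem : ∀ x : DihedralGroup 11, x ∈ allD := by decide

set_option maxRecDepth 10000 in
lemma Lkey_bool : (Lperms.all fun h => allD.all fun u => allD.all fun v =>
    adjB (h u) (h v) == adjB u v) = true := by decide

lemma Lperms_aut_key : ∀ h ∈ Lperms, ∀ u v, adjB (h u) (h v) = adjB u v := by
  intro h hm u v
  have hb := Lkey_bool
  rw [List.all_eq_true] at hb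
  have h1 := hb h hm
  rw [List.all_eq_true] at h1
  have h2 := h1 u (allD_mem u)
  rw [List.all_eq_true] at h2
  have h3 := h2 v (allD_mem v)
  exact beq_iff_eq.mp h3

set_option maxRecDepth 10000 in
lemma key1 : ∀ s : DihedralGroup 11, adjB (DihedralGroup.r 0) s = true →
    ∃ h ∈ Lperms, h (DihedralGroup.r 0) = DihedralGroup.r 0 ∧ h s = DihedralGroup.sr 0 := by
  decide

set_option maxRecDepth 10000 in
lemma key2 : ∀ s t : DihedralGroup 11, adjB (DihedralGroup.r 0) s = true → adjB s t = true →
    ¬ adjB (DihedralGroup.r 0) t = true → t ≠ DihedralGroup.r 0 →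
    ∃ h ∈ Lperms, h (DihedralGroup.r 0) = DihedralGroup.r 0 ∧ h s = DihedralGroup.sr 0 ∧
      h t = DihedralGroup.r 2 := by
  decide

def cset (p : Fin 4 → DihedralGroup 11) : Finset (DihedralGroup 11 × DihedralGroup 11) :=
  Finset.univ.filter fun q => adjB q.1 (p 0) = true ∧ adjB q.1 (p 2) = true ∧
    adjB q.2 (p 1) = true ∧ adjB q.2 (p 3) = true ∧ adjB q.1 q.2 = true

def geo3u : Fin 4 → DihedralGroup 11 :=
  ![DihedralGroup.r 0, DihedralGroup.sr 0, DihedralGroup.r 2, DihedralGroup.sr 6]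

def geo3w : Fin 4 → DihedralGroup 11 :=
  ![DihedralGroup.r 0, DihedralGroup.sr 0, DihedralGroup.r 2, DihedralGroup.sr 2]

set_option maxRecDepth 10000 in
lemma cset_u_card : (cset geo3u).card = 5 := by decide
set_option maxRecDepth 10000 in
lemma cset_w_card : (cset geo3w).card = 6 := by decide

lemma mem_autGroup_iff {V : Type*} {Γ : SimpleGraph V} {g : Equiv.Perm V} :
    g ∈ Γ.autGroup ↔ ∀ u v : V, Γ.Adj (g u) (g v) ↔ Γ.Adj u v := Iff.rfl

lemma Lperms_aut : ∀ h ∈ Lperms, h ∈ g226.autGroup := by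
  refine fun h hm => mem_autGroup_iff.mpr fun u v => ?_
  rw [adjB_iff, adjB_iff, Lperms_aut_key h hm u v]

lemma rmul_mem (g : DihedralGroup 11) : Equiv.mulRight g ∈ g226.autGroup := by
  refine mem_autGroup_iff.mpr fun u v => ?_
  show v * g * (u * g)⁻¹ ∈ g226S ↔ v * u⁻¹ ∈ g226S
  have h : v * g * (u * g)⁻¹ = v * u⁻¹ := by group
  rw [h]

lemma dist_eq_two' {V : Type*} {Γ : SimpleGraph V} {a b c : V} (h1 : Γ.Adj a b)
    (h2 : Γ.Adj b c) (h3 : ¬ Γ.Adj a c) (h4 : a ≠ c) : Γ.dist a c = 2 := by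
  have hle : Γ.dist a c ≤ 2 := by
    have := Γ.dist_le (Walk.cons h1 (Walk.cons h2 Walk.nil))
    simpa using this
  have h0 : Γ.dist a c ≠ 0 := by
    rw [SimpleGraph.dist_ne_zero_iff_ne_and_reachable]
    exact ⟨h4, ⟨Walk.cons h1 (Walk.cons h2 Walk.nil)⟩⟩
  have h1' : Γ.dist a c ≠ 1 := fun h => h3 (SimpleGraph.dist_eq_one_iff_adj.mp h)
  omega

lemma walk_len_two {V : Type*} {Γ : SimpleGraph V} {a c : V} (p : Γ.Walk a c)
    (hp : p.length = 2) : ∃ z, Γ.Adj a z ∧ Γ.Adj z c := by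
  match p, hp with
  | Walk.cons h (Walk.cons h' Walk.nil), _ => exact ⟨_, h, h'⟩

lemma dist_eq_three' {V : Type*} {Γ : SimpleGraph V} {a b c d : V} (h1 : Γ.Adj a b)
    (h2 : Γ.Adj b c) (h3 : Γ.Adj c d) (hna : ¬ Γ.Adj a d) (hne : a ≠ d)
    (hcn : ∀ z, ¬ (Γ.Adj a z ∧ Γ.Adj z d)) : Γ.dist a d = 3 := by
  have hle : Γ.dist a d ≤ 3 := by
    have := Γ.dist_le (Walk.cons h1 (Walk.cons h2 (Walk.cons h3 Walk.nil)))
    simpa using this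
  have h0 : Γ.dist a d ≠ 0 := by
    rw [SimpleGraph.dist_ne_zero_iff_ne_and_reachable]
    exact ⟨hne, ⟨Walk.cons h1 (Walk.cons h2 (Walk.cons h3 Walk.nil))⟩⟩
  have h1' : Γ.dist a d ≠ 1 := fun h => hna (SimpleGraph.dist_eq_one_iff_adj.mp h)
  have h2' : Γ.dist a d ≠ 2 := by
    intro h
    obtain ⟨p, hp⟩ := SimpleGraph.exists_walk_of_dist_ne_zero (G := Γ) (by omega : Γ.dist a d ≠ 0)
    rw [h] at hp
    obtain ⟨z, hz1, hz2⟩ := walk_len_two p hp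
    exact hcn z ⟨hz1, hz2⟩
  omega

/-- map a 1-geodesic to the canonical one. -/
lemma toCanon1 (u : Fin 2 → DihedralGroup 11) (h : g226.IsNGeodesic 1 u) :
    ∃ g ∈ g226.autGroup, g (u 0) = DihedralGroup.r 0 ∧ g (u 1) = DihedralGroup.sr 0 := by
  have hadj : g226.Adj (u 0) (u 1) := h.1 0
  set ρ := Equiv.mulRight (u 0)⁻¹ with hρ
  have hρm := rmul_mem (u 0)⁻¹
  have h0 : ρ (u 0) = DihedralGroup.r 0 := by
    show u 0 * (u 0)⁻¹ = _
    rw [mul_inv_cancel, DihedralGroup.one_def]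
  have hadj' : g226.Adj (ρ (u 0)) (ρ (u 1)) := (mem_autGroup_iff.mp hρm _ _).mpr hadj
  rw [h0] at hadj'
  obtain ⟨g, hgL, hg0, hg1⟩ := key1 _ ((adjB_iff _ _).mp hadj')
  refine ⟨g * ρ, mul_mem (Lperms_aut g hgL) hρm, ?_, ?_⟩
  · show g (ρ (u 0)) = _
    rw [h0, hg0]
  · exact hg1

/-- map a 2-geodesic to the canonical one. -/
lemma toCanon2 (u : Fin 3 → DihedralGroup 11) (h : g226.IsNGeodesic 2 u) :
    ∃ g ∈ g226.autGroup, g (u 0) = DihedralGroup.r 0 ∧ g (u 1) = DihedralGroup.sr 0 ∧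
      g (u 2) = DihedralGroup.r 2 := by
  have hadj1 : g226.Adj (u 0) (u 1) := h.1 0
  have hadj2 : g226.Adj (u 1) (u 2) := h.1 1
  have hd : g226.dist (u 0) (u 2) = 2 := h.2
  have hne : u 0 ≠ u 2 := by
    intro he
    rw [he] at hd
    rw [SimpleGraph.dist_self] at hd
    omega
  have hnadj : ¬ g226.Adj (u 0) (u 2) := fun ha => by
    rw [← SimpleGraph.dist_eq_one_iff_adj] at ha
    omega
  set ρ := Equiv.mulRight (u 0)⁻¹ with hρ
  have hρm := rmul_mem (u 0)⁻¹
  have h0 : ρ (u 0) = DihedralGroup.r 0 := by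
    show u 0 * (u 0)⁻¹ = _
    rw [mul_inv_cancel, DihedralGroup.one_def]
  have hiff := mem_autGroup_iff.mp hρm
  have hadj1' : g226.Adj (DihedralGroup.r 0) (ρ (u 1)) := by
    rw [← h0]; exact (hiff _ _).mpr hadj1
  have hadj2' : g226.Adj (ρ (u 1)) (ρ (u 2)) := (hiff _ _).mpr hadj2
  have hnadj' : ¬ g226.Adj (DihedralGroup.r 0) (ρ (u 2)) := by
    rw [← h0]; exact fun ha => hnadj ((hiff _ _).mp ha)
  have hne' : ρ (u 2) ≠ DihedralGroup.r 0 := by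
    rw [← h0]; exact fun he => hne (ρ.injective he).symm
  obtain ⟨g, hgL, hg0, hg1, hg2⟩ := key2 _ _ ((adjB_iff _ _).mp hadj1')
    ((adjB_iff _ _).mp hadj2') (fun hb => hnadj' ((adjB_iff _ _).mpr hb)) hne'
  refine ⟨g * ρ, mul_mem (Lperms_aut g hgL) hρm, ?_, hg1, hg2⟩
  show g (ρ (u 0)) = _
  rw [h0, hg0]

lemma cset_card_eq {g : Equiv.Perm (DihedralGroup 11)} (hg : g ∈ g226.autGroup)
    {p q : Fin 4 → DihedralGroup 11} (hpq : ∀ j, g (p j) = q j) :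
    (cset p).card = (cset q).card := by
  have hiff' := mem_autGroup_iff.mp hg
  have hiff : ∀ a b : DihedralGroup 11, adjB (g a) (g b) = true ↔ adjB a b = true := by
    intro a b
    rw [← adjB_iff, ← adjB_iff]
    exact hiff' a b
  apply Finset.card_bij' (fun x _ => (g x.1, g x.2)) (fun x _ => (g⁻¹ x.1, g⁻¹ x.2))
  · intro x hx
    simp only [cset, Finset.mem_filter, Finset.mem_univ, true_and] at hx ⊢
    obtain ⟨a1, a2, a3, a4, a5⟩ := hx
    refine ⟨?_, ?_, ?_, ?_, (hiff _ _).mpr a5⟩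
    · rw [← hpq 0]; exact (hiff _ _).mpr a1
    · rw [← hpq 2]; exact (hiff _ _).mpr a2
    · rw [← hpq 1]; exact (hiff _ _).mpr a3
    · rw [← hpq 3]; exact (hiff _ _).mpr a4
  · intro x hx
    simp only [cset, Finset.mem_filter, Finset.mem_univ, true_and] at hx ⊢
    obtain ⟨a1, a2, a3, a4, a5⟩ := hx
    have conv : ∀ y z : DihedralGroup 11, adjB y z = true → adjB (g⁻¹ y) (g⁻¹ z) = true := by
      intro y z hyz
      have := (hiff (g⁻¹ y) (g⁻¹ z)).mp
      simp only [Equiv.Perm.inv_def, Equiv.apply_symm_apply] at this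
      exact this hyz
    refine ⟨?_, ?_, ?_, ?_, conv _ _ a5⟩
    · rw [← hpq 0] at a1
      have := conv _ _ a1
      rwa [Equiv.Perm.inv_def, Equiv.symm_apply_apply] at this
    · rw [← hpq 2] at a2
      have := conv _ _ a2
      rwa [Equiv.Perm.inv_def, Equiv.symm_apply_apply] at this
    · rw [← hpq 1] at a3
      have := conv _ _ a3
      rwa [Equiv.Perm.inv_def, Equiv.symm_apply_apply] at this
    · rw [← hpq 3] at a4
      have := conv _ _ a4
      rwa [Equiv.Perm.inv_def, Equiv.symm_apply_apply] at this
  · intro x _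
    simp
  · intro x _
    simp

/-- The Cayley graph `𝒢_{22,6} = Cay(G, S)` of the dihedral group
of order `22` with `S = {b, a²b, a⁶b, a⁷b, a⁸b, a¹⁰b}` is `2`-geodesic transitive but
not `3`-geodesic transitive: its automorphism group is transitive on `i`-geodesics
for `i = 1, 2`, but not on `3`-geodesics. -/
theorem g226_two_geodesic_transitive_not_three :
    g226.GeodesicTransitiveOn g226.autGroup 2 ∧
      ¬ ∀ u w : Fin 4 → DihedralGroup 11, g226.IsNGeodesic 3 u → g226.IsNGeodesic 3 w →
          ∃ g ∈ g226.autGroup, ∀ j, g (u j) = w j := by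
  constructor
  · constructor
    · intro x y
      refine ⟨Equiv.mulRight (x⁻¹ * y), rmul_mem _, ?_⟩
      show x * (x⁻¹ * y) = y
      group
    · intro i h1 h2
      interval_cases i
      · constructor
        · refine ⟨![DihedralGroup.r 0, DihedralGroup.sr 0], fun j => ?_, ?_⟩
          · fin_cases j
            decide
          · show g226.dist (DihedralGroup.r 0) (DihedralGroup.sr 0) = 1
            rw [SimpleGraph.dist_eq_one_iff_adj]
            decide
        · intro u w hu hw
          obtain ⟨gu, hgum, hgu0, hgu1⟩ := toCanon1 u hu
          obtain ⟨gw, hgwm, hgw0, hgw1⟩ := toCanon1 w hw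
          refine ⟨gw⁻¹ * gu, mul_mem (inv_mem hgwm) hgum, fun j => ?_⟩
          fin_cases j
          · show gw⁻¹ (gu (u 0)) = w 0
            rw [hgu0, ← hgw0, Equiv.Perm.inv_def, Equiv.symm_apply_apply]
          · show gw⁻¹ (gu (u 1)) = w 1
            rw [hgu1, ← hgw1, Equiv.Perm.inv_def, Equiv.symm_apply_apply]
      · constructor
        · refine ⟨![DihedralGroup.r 0, DihedralGroup.sr 0, DihedralGroup.r 2], fun j => ?_, ?_⟩
          · fin_cases j <;> decide
          · show g226.dist (DihedralGroup.r 0) (DihedralGroup.r 2) = 2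
            exact dist_eq_two' (by decide : g226.Adj (DihedralGroup.r 0) (DihedralGroup.sr 0))
              (by decide) (by decide) (by decide)
        · intro u w hu hw
          obtain ⟨gu, hgum, hgu0, hgu1, hgu2⟩ := toCanon2 u hu
          obtain ⟨gw, hgwm, hgw0, hgw1, hgw2⟩ := toCanon2 w hw
          refine ⟨gw⁻¹ * gu, mul_mem (inv_mem hgwm) hgum, fun j => ?_⟩
          fin_cases j
          · show gw⁻¹ (gu (u 0)) = w 0
            rw [hgu0, ← hgw0, Equiv.Perm.inv_def, Equiv.symm_apply_apply]
          · show gw⁻¹ (gu (u 1)) = w 1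
            rw [hgu1, ← hgw1, Equiv.Perm.inv_def, Equiv.symm_apply_apply]
          · show gw⁻¹ (gu (u 2)) = w 2
            rw [hgu2, ← hgw2, Equiv.Perm.inv_def, Equiv.symm_apply_apply]
  · intro hcontra
    have hu : g226.IsNGeodesic 3 geo3u := by
      refine ⟨fun j => ?_, ?_⟩
      · fin_cases j <;> decide
      · show g226.dist (DihedralGroup.r 0) (DihedralGroup.sr 6) = 3
        exact dist_eq_three' (by decide : g226.Adj (DihedralGroup.r 0) (DihedralGroup.sr 0))
          (by decide : g226.Adj (DihedralGroup.sr 0) (DihedralGroup.r 2))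
          (by decide : g226.Adj (DihedralGroup.r 2) (DihedralGroup.sr 6))
          (by decide) (by decide) (by decide)
    have hw : g226.IsNGeodesic 3 geo3w := by
      refine ⟨fun j => ?_, ?_⟩
      · fin_cases j <;> decide
      · show g226.dist (DihedralGroup.r 0) (DihedralGroup.sr 2) = 3
        exact dist_eq_three' (by decide : g226.Adj (DihedralGroup.r 0) (DihedralGroup.sr 0))
          (by decide : g226.Adj (DihedralGroup.sr 0) (DihedralGroup.r 2))
          (by decide : g226.Adj (DihedralGroup.r 2) (DihedralGroup.sr 2))
          (by decide) (by decide) (by decide)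
    obtain ⟨g, hgm, hgj⟩ := hcontra geo3u geo3w hu hw
    have := cset_card_eq hgm hgj
    rw [cset_u_card, cset_w_card] at this
    omega
end

section
/- Let n and k be integers with 2 ≤ k ≤ n−k. Then the Johnson graph J(n,k) is geodesic transitive but not 2-arc transitive: Aut(J(n,k)) acts transitively on the set of i-geodesics of J(n,k) for every 1 ≤ i ≤ diam(J(n,k)) = k, but Aut(J(n,k)) does not act transitively on the set of 2-arcs of J(n,k). -/
open SimpleGraph

variable {V : Type*}

/-- The Johnson graph `J(n,k)`: vertices are the `k`-element subsets of an
`n`-element set, two of them adjacent iff their intersection has `k - 1` elements. -/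
def johnsonGraph (n k : ℕ) : SimpleGraph {s : Finset (Fin n) // s.card = k} where
  Adj U W := U ≠ W ∧ (U.1 ∩ W.1).card = k - 1
  symm := ⟨fun U W ⟨h1, h2⟩ => ⟨h1.symm, by rwa [Finset.inter_comm]⟩⟩
  loopless := ⟨fun U hU => hU.1 rfl⟩

namespace JohnsonProof

open Finset

section swaps
variable {α : Type*} [DecidableEq α]

lemma mem_image_perm (σ : Equiv.Perm α) (Q : Finset α) (z : α) :
    z ∈ Q.image σ ↔ σ.symm z ∈ Q := by
  constructor
  · rintro h
    obtain ⟨t, ht, rfl⟩ := Finset.mem_image.mp h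
    simpa using ht
  · intro h
    exact Finset.mem_image.mpr ⟨σ.symm z, h, by simp⟩

lemma swap_mem_iff {a b : α} {Q : Finset α} (h : a ∈ Q ↔ b ∈ Q) (z : α) :
    Equiv.swap a b z ∈ Q ↔ z ∈ Q := by
  rcases eq_or_ne z a with rfl | hza
  · rw [Equiv.swap_apply_left]; exact h.symm
  rcases eq_or_ne z b with rfl | hzb
  · rw [Equiv.swap_apply_right]; exact h
  · rw [Equiv.swap_apply_of_ne_of_ne hza hzb]

lemma image_swap_eq_self {a b : α} {Q : Finset α} (h : a ∈ Q ↔ b ∈ Q) :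
    Q.image (Equiv.swap a b) = Q := by
  ext z
  rw [mem_image_perm, Equiv.symm_swap, swap_mem_iff h]

lemma image_swap_erase {a b : α} {Q : Finset α} (ha : a ∈ Q) (hb : b ∈ Q) :
    (Q.erase a).image (Equiv.swap a b) = Q.erase b := by
  ext z
  rw [mem_image_perm, Equiv.symm_swap, Finset.mem_erase, Finset.mem_erase]
  rcases eq_or_ne a b with rfl | hab
  · simp
  rcases eq_or_ne z a with rfl | hza
  · rw [Equiv.swap_apply_left]
    simp [hab, hab.symm, hb, ha]
  rcases eq_or_ne z b with rfl | hzb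
  · rw [Equiv.swap_apply_right]
    simp [hab, hza]
  · rw [Equiv.swap_apply_of_ne_of_ne hza hzb]
    simp [hza, hzb]

lemma image_swaps_move {x x' y y' : α} {P : Finset α} (hx : x ∈ P) (hx' : x' ∈ P)
    (hy : y ∉ P) (hy' : y' ∉ P) :
    ((insert y (P.erase x)).image (Equiv.swap y y')).image (Equiv.swap x x')
      = insert y' (P.erase x') := by
  have h1 : (insert y (P.erase x)).image (Equiv.swap y y') = insert y' (P.erase x) := by
    rw [Finset.image_insert, Equiv.swap_apply_left,
      image_swap_eq_self (Q := P.erase x) (by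
        simp only [Finset.mem_erase]
        constructor
        · rintro ⟨_, h⟩; exact absurd h hy
        · rintro ⟨_, h⟩; exact absurd h hy')]
  rw [h1, Finset.image_insert,
    Equiv.swap_apply_of_ne_of_ne (fun h => hy' (by rw [h]; exact hx))
      (fun h => hy' (by rw [h]; exact hx')),
    image_swap_erase hx hx']

lemma eq_insert_erase {x y : α} {P U : Finset α} (hPU : P \ U = {x}) (hUP : U \ P = {y}) :
    U = insert y (P.erase x) := by
  have hxP : x ∈ P ∧ x ∉ U := by
    have : x ∈ P \ U := hPU ▸ Finset.mem_singleton_self x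
    exact Finset.mem_sdiff.mp this
  have hyU : y ∈ U ∧ y ∉ P := by
    have : y ∈ U \ P := hUP ▸ Finset.mem_singleton_self y
    exact Finset.mem_sdiff.mp this
  ext z
  rw [Finset.mem_insert, Finset.mem_erase]
  constructor
  · intro hz
    by_cases hzP : z ∈ P
    · refine Or.inr ⟨?_, hzP⟩
      rintro rfl
      exact hxP.2 hz
    · left
      have : z ∈ U \ P := Finset.mem_sdiff.mpr ⟨hz, hzP⟩
      rw [hUP] at this
      exact Finset.mem_singleton.mp this
  · rintro (rfl | ⟨hzx, hzP⟩)
    · exact hyU.1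
    · by_contra hzU
      have : z ∈ P \ U := Finset.mem_sdiff.mpr ⟨hzP, hzU⟩
      rw [hPU] at this
      exact hzx (Finset.mem_singleton.mp this)

lemma image_mul (a b : Equiv.Perm α) (s : Finset α) :
    s.image ⇑(a * b) = (s.image b).image a := by
  rw [Finset.image_image]; rfl

end swaps

variable {n k : ℕ}

lemma sdiff_card_eq (U W : {s : Finset (Fin n) // s.card = k}) :
    (U.1 \ W.1).card + (U.1 ∩ W.1).card = k := by
  rw [Finset.card_sdiff_add_card_inter, U.2]

lemma sdiff_comm_card (U W : {s : Finset (Fin n) // s.card = k}) :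
    (U.1 \ W.1).card = (W.1 \ U.1).card := by
  have h1 := sdiff_card_eq U W
  have h2 := sdiff_card_eq W U
  rw [Finset.inter_comm] at h2
  omega

lemma adj_iff (hk : 1 ≤ k) {U W : {s : Finset (Fin n) // s.card = k}} :
    (johnsonGraph n k).Adj U W ↔ (U.1 \ W.1).card = 1 := by
  constructor
  · rintro ⟨hne, hcard⟩
    have := sdiff_card_eq U W
    omega
  · intro h1
    have := sdiff_card_eq U W
    refine ⟨?_, by omega⟩
    rintro rfl
    simp [Finset.sdiff_self] at h1

lemma exists_walk (hk : 1 ≤ k) :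
    ∀ (m : ℕ) (U W : {s : Finset (Fin n) // s.card = k}), (U.1 \ W.1).card = m →
      ∃ p : (johnsonGraph n k).Walk U W, p.length = m := by
  intro m
  induction m with
  | zero =>
    intro U W h
    have hUW : U = W := by
      apply Subtype.ext
      apply Finset.eq_of_subset_of_card_le _ (by rw [U.2, W.2])
      exact Finset.sdiff_eq_empty_iff_subset.mp (Finset.card_eq_zero.mp h)
    subst hUW
    exact ⟨Walk.nil, rfl⟩
  | succ m ih =>
    intro U W h
    obtain ⟨a, ha⟩ : (U.1 \ W.1).Nonempty := Finset.card_pos.mp (by omega)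
    obtain ⟨b, hb⟩ : (W.1 \ U.1).Nonempty := by
      apply Finset.card_pos.mp
      rw [← sdiff_comm_card]
      omega
    rw [Finset.mem_sdiff] at ha hb
    have haU : a ∈ U.1 := ha.1
    have hbU : b ∉ U.1 := hb.2
    have hU' : (insert b (U.1.erase a)).card = k := by
      rw [Finset.card_insert_of_notMem (fun hmem => hbU (Finset.mem_of_mem_erase hmem)),
        Finset.card_erase_of_mem haU, U.2]
      omega
    set U' : {s : Finset (Fin n) // s.card = k} := ⟨insert b (U.1.erase a), hU'⟩ with hU'def
    have hadj : (johnsonGraph n k).Adj U U' := by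
      rw [adj_iff hk]
      have : U.1 \ U'.1 = {a} := by
        ext x
        simp only [hU'def, Finset.mem_sdiff, Finset.mem_insert, Finset.mem_erase,
          Finset.mem_singleton]
        constructor
        · rintro ⟨hxU, hx⟩
          by_contra hxa
          exact hx (Or.inr ⟨hxa, hxU⟩)
        · rintro rfl
          exact ⟨haU, by rintro (rfl | ⟨h1, h2⟩) <;> simp_all⟩
      rw [this, Finset.card_singleton]
    have hU'W : (U'.1 \ W.1).card = m := by
      have : U'.1 \ W.1 = (U.1 \ W.1).erase a := by
        ext x
        simp only [hU'def, Finset.mem_sdiff, Finset.mem_insert, Finset.mem_erase]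
        constructor
        · rintro ⟨rfl | ⟨hxa, hxU⟩, hxW⟩
          · exact absurd hb.1 hxW
          · exact ⟨hxa, hxU, hxW⟩
        · rintro ⟨hxa, hxU, hxW⟩
          exact ⟨Or.inr ⟨hxa, hxU⟩, hxW⟩
      rw [this, Finset.card_erase_of_mem (Finset.mem_sdiff.mpr ha), h]
      omega
    obtain ⟨p, hp⟩ := ih U' W hU'W
    exact ⟨Walk.cons hadj p, by simp [hp]⟩

lemma card_le_walk (hk : 1 ≤ k) {U W : {s : Finset (Fin n) // s.card = k}}
    (p : (johnsonGraph n k).Walk U W) : (U.1 \ W.1).card ≤ p.length := by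
  induction p with
  | nil => simp
  | @cons U X W h p ih =>
    have h1 : (U.1 \ X.1).card = 1 := (adj_iff hk).mp h
    have hsub : U.1 \ W.1 ⊆ (X.1 \ W.1) ∪ (U.1 \ X.1) := by
      intro x hx
      rw [Finset.mem_sdiff] at hx
      rw [Finset.mem_union, Finset.mem_sdiff, Finset.mem_sdiff]
      by_cases hxX : x ∈ X.1
      · exact Or.inl ⟨hxX, hx.2⟩
      · exact Or.inr ⟨hx.1, hxX⟩
    calc (U.1 \ W.1).card ≤ ((X.1 \ W.1) ∪ (U.1 \ X.1)).card := Finset.card_le_card hsub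
      _ ≤ (X.1 \ W.1).card + (U.1 \ X.1).card := Finset.card_union_le _ _
      _ ≤ p.length + 1 := by omega
      _ = (Walk.cons h p).length := by simp

lemma dist_eq (hk : 1 ≤ k) (U W : {s : Finset (Fin n) // s.card = k}) :
    (johnsonGraph n k).dist U W = (U.1 \ W.1).card := by
  obtain ⟨p, hp⟩ := exists_walk hk _ U W rfl
  apply le_antisymm
  · exact hp ▸ SimpleGraph.dist_le p
  · have hr : (johnsonGraph n k).Reachable U W := ⟨p⟩
    obtain ⟨q, hq⟩ := hr.exists_walk_length_eq_dist
    exact hq ▸ card_le_walk hk q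

lemma jreach (hk : 1 ≤ k) (U W : {s : Finset (Fin n) // s.card = k}) :
    (johnsonGraph n k).Reachable U W :=
  ⟨(exists_walk hk _ U W rfl).choose⟩

lemma jnonempty (hkn : k ≤ n) : Nonempty {s : Finset (Fin n) // s.card = k} :=
  ⟨⟨(Finset.range k).attachFin (fun m hm => lt_of_lt_of_le (Finset.mem_range.mp hm) hkn),
    by rw [Finset.card_attachFin, Finset.card_range]⟩⟩

lemma jconn (hk : 1 ≤ k) (hkn : k ≤ n) : (johnsonGraph n k).Connected := by
  have := jnonempty (n := n) (k := k) hkn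
  exact ⟨fun U W => jreach hk U W⟩

lemma chain_dist {G : SimpleGraph V} (hconn : G.Connected) {m : ℕ} (u : Fin (m + 1) → V)
    (hadj : ∀ j : Fin m, G.Adj (u j.castSucc) (u j.succ)) :
    ∀ (d : ℕ) (p q : Fin (m + 1)), q.val = p.val + d → G.dist (u p) (u q) ≤ d := by
  intro d
  induction d with
  | zero =>
    intro p q h
    have : p = q := Fin.ext (by omega)
    subst this
    simp
  | succ d ih =>
    intro p q h
    have hq : p.val + d < m := by omega
    set j : Fin m := ⟨p.val + d, hq⟩ with hj
    have h1 : G.dist (u p) (u j.castSucc) ≤ d := ih p j.castSucc (by simp [hj])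
    have hqq : q = j.succ := Fin.ext (by simp [hj]; omega)
    have h2 : G.dist (u j.castSucc) (u q) ≤ 1 := by
      rw [hqq]
      exact le_trans (SimpleGraph.dist_le (Walk.cons (hadj j) Walk.nil)) (by simp)
    calc G.dist (u p) (u q) ≤ G.dist (u p) (u j.castSucc) + G.dist (u j.castSucc) (u q) :=
          hconn.dist_triangle
      _ ≤ d + 1 := by omega

lemma geo_dist {G : SimpleGraph V} (hconn : G.Connected) {m : ℕ} (u : Fin (m + 1) → V)
    (hadj : ∀ j : Fin m, G.Adj (u j.castSucc) (u j.succ))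
    (hd : G.dist (u 0) (u (Fin.last m)) = m) (j : Fin (m + 1)) :
    G.dist (u 0) (u j) = j.val ∧ G.dist (u j) (u (Fin.last m)) = m - j.val := by
  have hjm : j.val ≤ m := by omega
  have h1 : G.dist (u 0) (u j) ≤ j.val := chain_dist hconn u hadj j.val 0 j (by simp)
  have h2 : G.dist (u j) (u (Fin.last m)) ≤ m - j.val :=
    chain_dist hconn u hadj (m - j.val) j (Fin.last m) (by simp [Fin.last]; omega)
  have h3 := hconn.dist_triangle (u := u 0) (v := u j) (w := u (Fin.last m))
  omega

lemma geo_structure (hk : 1 ≤ k) (hconn : (johnsonGraph n k).Connected) {m : ℕ}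
    (u : Fin (m + 1) → {s : Finset (Fin n) // s.card = k})
    (hadj : ∀ j : Fin m, (johnsonGraph n k).Adj (u j.castSucc) (u j.succ))
    (hd : (johnsonGraph n k).dist (u 0) (u (Fin.last m)) = m) (j : Fin (m + 1)) :
    (u 0).1 ∩ (u (Fin.last m)).1 ⊆ (u j).1 ∧ (u j).1 ⊆ (u 0).1 ∪ (u (Fin.last m)).1 := by
  obtain ⟨hj0, hjm⟩ := geo_dist hconn u hadj hd j
  rw [dist_eq hk] at hj0 hjm hd
  have hjle : j.val ≤ m := by omega
  have e0j : ((u 0).1 \ (u j).1).card + ((u 0).1 ∩ (u j).1).card = k :=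
    Finset.card_sdiff_add_card_inter _ _ |>.trans (u 0).2
  have ejm : ((u j).1 \ (u (Fin.last m)).1).card + ((u j).1 ∩ (u (Fin.last m)).1).card = k :=
    Finset.card_sdiff_add_card_inter _ _ |>.trans (u j).2
  have e0m : ((u 0).1 \ (u (Fin.last m)).1).card + ((u 0).1 ∩ (u (Fin.last m)).1).card = k :=
    Finset.card_sdiff_add_card_inter _ _ |>.trans (u 0).2
  have hcomm : ((u 0).1 ∩ (u j).1).card = ((u j).1 ∩ (u 0).1).card := by rw [Finset.inter_comm]
  have hunion : (((u j).1 ∩ (u 0).1) ∪ ((u j).1 ∩ (u (Fin.last m)).1)).card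
      + (((u j).1 ∩ (u 0).1) ∩ ((u j).1 ∩ (u (Fin.last m)).1)).card
      = ((u j).1 ∩ (u 0).1).card + ((u j).1 ∩ (u (Fin.last m)).1).card :=
    Finset.card_union_add_card_inter _ _
  have hU : ((u j).1 ∩ (u 0).1) ∪ ((u j).1 ∩ (u (Fin.last m)).1)
      = (u j).1 ∩ ((u 0).1 ∪ (u (Fin.last m)).1) := (Finset.inter_union_distrib_left _ _ _).symm
  have hI : ((u j).1 ∩ (u 0).1) ∩ ((u j).1 ∩ (u (Fin.last m)).1)
      = (u j).1 ∩ ((u 0).1 ∩ (u (Fin.last m)).1) := by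
    ext x
    simp only [Finset.mem_inter]
    tauto
  rw [hU, hI] at hunion
  have hIle : ((u j).1 ∩ ((u 0).1 ∩ (u (Fin.last m)).1)).card
      ≤ ((u 0).1 ∩ (u (Fin.last m)).1).card :=
    Finset.card_le_card Finset.inter_subset_right
  have hUle : ((u j).1 ∩ ((u 0).1 ∪ (u (Fin.last m)).1)).card ≤ k := by
    exact le_trans (Finset.card_le_card Finset.inter_subset_left) (u j).2.le
  have hIeq : ((u j).1 ∩ ((u 0).1 ∩ (u (Fin.last m)).1)).card
      = ((u 0).1 ∩ (u (Fin.last m)).1).card := by omega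
  have hUeq : ((u j).1 ∩ ((u 0).1 ∪ (u (Fin.last m)).1)).card = k := by omega
  constructor
  · have := Finset.eq_of_subset_of_card_le
      (Finset.inter_subset_right : (u j).1 ∩ ((u 0).1 ∩ (u (Fin.last m)).1) ⊆ _) hIeq.ge
    rw [← this]
    exact Finset.inter_subset_left
  · have := Finset.eq_of_subset_of_card_le
      (Finset.inter_subset_left : (u j).1 ∩ ((u 0).1 ∪ (u (Fin.last m)).1) ⊆ _)
      (by rw [hUeq]; exact (u j).2.le)
    rw [← this]
    exact Finset.inter_subset_right

def liftPerm (n k : ℕ) (σ : Equiv.Perm (Fin n)) :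
    Equiv.Perm {s : Finset (Fin n) // s.card = k} where
  toFun s := ⟨s.1.image σ, by rw [Finset.card_image_of_injective _ σ.injective, s.2]⟩
  invFun s := ⟨s.1.image σ.symm, by rw [Finset.card_image_of_injective _ σ.symm.injective, s.2]⟩
  left_inv s := Subtype.ext <| by
    simp only [Finset.image_image]
    rw [Equiv.symm_comp_self, Finset.image_id]
  right_inv s := Subtype.ext <| by
    simp only [Finset.image_image]
    rw [Equiv.self_comp_symm, Finset.image_id]

lemma liftPerm_apply (σ : Equiv.Perm (Fin n)) (s : {s : Finset (Fin n) // s.card = k}) :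
    (liftPerm n k σ s).1 = s.1.image σ := rfl

lemma liftPerm_mem_aut (σ : Equiv.Perm (Fin n)) :
    liftPerm n k σ ∈ (johnsonGraph n k).autGroup := by
  intro U W
  show ((_ : {s : Finset (Fin n) // s.card = k}) ≠ _ ∧ _) ↔ _
  constructor
  · rintro ⟨hne, hcard⟩
    refine ⟨fun h => hne (by rw [h]), ?_⟩
    rw [← hcard, liftPerm_apply, liftPerm_apply, ← Finset.image_inter _ _ σ.injective,
      Finset.card_image_of_injective _ σ.injective]
  · rintro ⟨hne, hcard⟩
    refine ⟨fun h => hne ((liftPerm n k σ).injective h), ?_⟩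
    rw [liftPerm_apply, liftPerm_apply, ← Finset.image_inter _ _ σ.injective,
      Finset.card_image_of_injective _ σ.injective, hcard]

lemma exists_perm_image (S T : Finset (Fin n)) (h : S.card = T.card) :
    ∃ σ : Equiv.Perm (Fin n), S.image σ = T := by
  classical
  let e : {x // x ∈ S} ≃ {x // x ∈ T} := Finset.equivOfCardEq h
  refine ⟨e.extendSubtype, ?_⟩
  apply Finset.eq_of_subset_of_card_le
  · intro x hx
    obtain ⟨s, hs, rfl⟩ := Finset.mem_image.mp hx
    exact e.extendSubtype_mem s hs
  · rw [Finset.card_image_of_injective _ (Equiv.injective _), h]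

lemma geo_trans (hk : 1 ≤ k) (hkn : k ≤ n) :
    ∀ (i : ℕ) (u w : Fin (i + 1) → {s : Finset (Fin n) // s.card = k}),
      (∀ j : Fin i, (johnsonGraph n k).Adj (u j.castSucc) (u j.succ)) →
      (johnsonGraph n k).dist (u 0) (u (Fin.last i)) = i →
      (∀ j : Fin i, (johnsonGraph n k).Adj (w j.castSucc) (w j.succ)) →
      (johnsonGraph n k).dist (w 0) (w (Fin.last i)) = i →
      ∃ σ : Equiv.Perm (Fin n), ∀ j, (u j).1.image σ = (w j).1 := by
  have hconn := jconn hk hkn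
  intro i
  induction i with
  | zero =>
    intro u w _ _ _ _
    obtain ⟨σ, hσ⟩ := exists_perm_image (u 0).1 (w 0).1 (by rw [(u 0).2, (w 0).2])
    refine ⟨σ, fun j => ?_⟩
    have hj : j = 0 := Fin.ext (by omega)
    rw [hj]; exact hσ
  | succ i ih =>
    intro u w huadj hud hwadj hwd
    set L0 : Fin (i + 2) := (Fin.last i).castSucc with hL0
    set L1 : Fin (i + 2) := Fin.last (i + 1) with hL1
    set u' : Fin (i + 1) → {s : Finset (Fin n) // s.card = k} := fun j => u j.castSucc with hu'
    set w' : Fin (i + 1) → {s : Finset (Fin n) // s.card = k} := fun j => w j.castSucc with hw'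
    have hu'0 : u' 0 = u 0 := by rw [hu']; norm_num
    have hw'0 : w' 0 = w 0 := by rw [hw']; norm_num
    have huadj' : ∀ j : Fin i, (johnsonGraph n k).Adj (u' j.castSucc) (u' j.succ) := by
      intro j
      have h := huadj j.castSucc
      rw [Fin.succ_castSucc] at h
      exact h
    have hwadj' : ∀ j : Fin i, (johnsonGraph n k).Adj (w' j.castSucc) (w' j.succ) := by
      intro j
      have h := hwadj j.castSucc
      rw [Fin.succ_castSucc] at h
      exact h
    have hud' : (johnsonGraph n k).dist (u' 0) (u' (Fin.last i)) = i := by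
      have h := (geo_dist hconn u huadj hud ((Fin.last i).castSucc)).1
      rw [hu'0]
      simpa using h
    have hwd' : (johnsonGraph n k).dist (w' 0) (w' (Fin.last i)) = i := by
      have h := (geo_dist hconn w hwadj hwd ((Fin.last i).castSucc)).1
      rw [hw'0]
      simpa using h
    obtain ⟨σ, hσ⟩ := ih u' w' huadj' hud' hwadj' hwd'
    have hadjU : (johnsonGraph n k).Adj (u L0) (u L1) := by
      have h := huadj (Fin.last i)
      rwa [Fin.succ_last] at h
    have hadjW : (johnsonGraph n k).Adj (w L0) (w L1) := by
      have h := hwadj (Fin.last i)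
      rwa [Fin.succ_last] at h
    obtain ⟨xt, hxt⟩ := Finset.card_eq_one.mp ((adj_iff hk).mp hadjU)
    obtain ⟨yt, hyt⟩ := Finset.card_eq_one.mp
      (by rw [← sdiff_comm_card]; exact (adj_iff hk).mp hadjU :
        ((u L1).1 \ (u L0).1).card = 1)
    obtain ⟨x', hx't⟩ := Finset.card_eq_one.mp ((adj_iff hk).mp hadjW)
    obtain ⟨y', hy't⟩ := Finset.card_eq_one.mp
      (by rw [← sdiff_comm_card]; exact (adj_iff hk).mp hadjW :
        ((w L1).1 \ (w L0).1).card = 1)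
    have hxtmem : xt ∈ (u L0).1 ∧ xt ∉ (u L1).1 :=
      Finset.mem_sdiff.mp (hxt ▸ Finset.mem_singleton_self xt)
    have hytmem : yt ∈ (u L1).1 ∧ yt ∉ (u L0).1 :=
      Finset.mem_sdiff.mp (hyt ▸ Finset.mem_singleton_self yt)
    have hx'mem : x' ∈ (w L0).1 ∧ x' ∉ (w L1).1 :=
      Finset.mem_sdiff.mp (hx't ▸ Finset.mem_singleton_self x')
    have hy'mem : y' ∈ (w L1).1 ∧ y' ∉ (w L0).1 :=
      Finset.mem_sdiff.mp (hy't ▸ Finset.mem_singleton_self y')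
    have hstruU := geo_structure hk hconn u huadj hud
    have hstruU' := geo_structure hk hconn u' huadj' hud'
    have hstruW := geo_structure hk hconn w hwadj hwd
    have hstruW' := geo_structure hk hconn w' hwadj' hwd'
    have hxt0 : xt ∈ (u 0).1 := by
      have h := (hstruU L0).2 hxtmem.1
      rcases Finset.mem_union.mp h with h | h
      · exact h
      · exact absurd h hxtmem.2
    have hxtj : ∀ j : Fin (i + 1), xt ∈ (u j.castSucc).1 := by
      intro j
      exact (hstruU' j).1 (Finset.mem_inter.mpr ⟨by rw [hu'0]; exact hxt0, hxtmem.1⟩)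
    have hyt0 : yt ∉ (u 0).1 := by
      intro h
      exact hytmem.2 ((hstruU L0).1 (Finset.mem_inter.mpr ⟨h, hytmem.1⟩))
    have hytj : ∀ j : Fin (i + 1), yt ∉ (u j.castSucc).1 := by
      intro j h
      have h2 := (hstruU' j).2 h
      rw [hu'0] at h2
      rcases Finset.mem_union.mp h2 with h3 | h3
      · exact hyt0 h3
      · exact hytmem.2 h3
    have hx'0 : x' ∈ (w 0).1 := by
      have h := (hstruW L0).2 hx'mem.1
      rcases Finset.mem_union.mp h with h | h
      · exact h
      · exact absurd h hx'mem.2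
    have hx'j : ∀ j : Fin (i + 1), x' ∈ (w j.castSucc).1 := by
      intro j
      exact (hstruW' j).1 (Finset.mem_inter.mpr ⟨by rw [hw'0]; exact hx'0, hx'mem.1⟩)
    have hy'0 : y' ∉ (w 0).1 := by
      intro h
      exact hy'mem.2 ((hstruW L0).1 (Finset.mem_inter.mpr ⟨h, hy'mem.1⟩))
    have hy'j : ∀ j : Fin (i + 1), y' ∉ (w j.castSucc).1 := by
      intro j h
      have h2 := (hstruW' j).2 h
      rw [hw'0] at h2
      rcases Finset.mem_union.mp h2 with h3 | h3
      · exact hy'0 h3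
      · exact hy'mem.2 h3
    set x : Fin n := σ xt with hxdef
    set y : Fin n := σ yt with hydef
    have hxwj : ∀ j : Fin (i + 1), x ∈ (w j.castSucc).1 := by
      intro j
      rw [← hσ j]
      exact Finset.mem_image_of_mem _ (hxtj j)
    have hywj : ∀ j : Fin (i + 1), y ∉ (w j.castSucc).1 := by
      intro j h
      rw [← hσ j] at h
      obtain ⟨t, ht, heq⟩ := Finset.mem_image.mp h
      rw [σ.injective heq] at ht
      exact hytj j ht
    have hPw : (u L0).1.image σ = (w L0).1 := hσ (Fin.last i)
    have hxP : x ∈ (w L0).1 := hxwj (Fin.last i)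
    have hx'P : x' ∈ (w L0).1 := hx'mem.1
    have hyP : y ∉ (w L0).1 := hywj (Fin.last i)
    have hy'P : y' ∉ (w L0).1 := hy'mem.2
    refine ⟨Equiv.swap x x' * Equiv.swap y y' * σ, ?_⟩
    intro j
    have himg : ∀ s : Finset (Fin n),
        s.image ⇑(Equiv.swap x x' * Equiv.swap y y' * σ)
          = ((s.image σ).image (Equiv.swap y y')).image (Equiv.swap x x') := by
      intro s
      rw [mul_assoc, image_mul, image_mul]
    rw [himg]
    refine Fin.lastCases ?_ ?_ j
    · have hUL1 : (u L1).1 = insert yt ((u L0).1.erase xt) := eq_insert_erase hxt hyt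
      have hWL1 : (w L1).1 = insert y' ((w L0).1.erase x') := eq_insert_erase hx't hy't
      have himg2 : (u L1).1.image σ = insert y ((w L0).1.erase x) := by
        rw [hUL1, Finset.image_insert, Finset.image_erase σ.injective, hPw]
      rw [himg2, image_swaps_move hxP hx'P hyP hy'P, hWL1]
    · intro j'
      rw [hσ j', image_swap_eq_self (iff_of_false (hywj j') (hy'j j')),
        image_swap_eq_self (iff_of_true (hxwj j') (hx'j j'))]

lemma exists_geodesic (hk : 1 ≤ k) (h2k : 2 * k ≤ n) {i : ℕ} (hik : i ≤ k) :
    ∃ u : Fin (i + 1) → {s : Finset (Fin n) // s.card = k},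
      (∀ j : Fin i, (johnsonGraph n k).Adj (u j.castSucc) (u j.succ)) ∧
      (johnsonGraph n k).dist (u 0) (u (Fin.last i)) = i := by
  refine ⟨fun j => ⟨(Finset.Ico j.val (k + j.val)).attachFin (n := n)
      (fun m hm => by have h1 := Finset.mem_Ico.mp hm; have h2 := j.isLt; omega),
    by rw [Finset.card_attachFin, Nat.card_Ico]; omega⟩, ?_, ?_⟩
  · intro j
    rw [adj_iff hk]
    have hjn : j.val < n := by have := j.isLt; omega
    have hset : ((Finset.Ico (j.castSucc).val (k + (j.castSucc).val)).attachFin (n := n)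
          (fun m hm => by have h1 := Finset.mem_Ico.mp hm; have h2 := j.castSucc.isLt; omega) \
        (Finset.Ico (j.succ).val (k + (j.succ).val)).attachFin (n := n)
          (fun m hm => by have h1 := Finset.mem_Ico.mp hm; have h2 := j.succ.isLt; omega))
        = {(⟨j.val, hjn⟩ : Fin n)} := by
      ext a
      simp only [Finset.mem_sdiff, Finset.mem_attachFin, Finset.mem_Ico, Finset.mem_singleton,
        Fin.coe_castSucc, Fin.val_succ, Fin.ext_iff]
      omega
    rw [hset, Finset.card_singleton]
  · rw [dist_eq hk]
    have hset : ((Finset.Ico ((0 : Fin (i + 1))).val (k + ((0 : Fin (i + 1))).val)).attachFin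
          (n := n) (fun m hm => by
            have h1 := Finset.mem_Ico.mp hm; have h2 := ((0 : Fin (i + 1))).isLt; omega) \
        (Finset.Ico ((Fin.last i)).val (k + ((Fin.last i)).val)).attachFin (n := n)
          (fun m hm => by have h1 := Finset.mem_Ico.mp hm; have h2 := (Fin.last i).isLt; omega))
        = (Finset.Ico 0 i).attachFin (n := n)
            (fun m hm => by have h1 := Finset.mem_Ico.mp hm; omega) := by
      ext a
      simp only [Finset.mem_sdiff, Finset.mem_attachFin, Finset.mem_Ico, Fin.val_zero,
        Fin.val_last]
      omega
    rw [hset, Finset.card_attachFin, Nat.card_Ico]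
    omega

lemma jdiam (hk : 1 ≤ k) (h2k : 2 * k ≤ n) : (johnsonGraph n k).diam = k := by
  have hle : (johnsonGraph n k).ediam ≤ (k : ℕ∞) := by
    apply SimpleGraph.ediam_le_of_edist_le
    intro U W
    obtain ⟨p, hp⟩ := exists_walk hk _ U W rfl
    calc (johnsonGraph n k).edist U W ≤ (p.length : ℕ∞) := SimpleGraph.edist_le p
      _ ≤ (k : ℕ∞) := by
        rw [hp]
        exact_mod_cast Nat.cast_le.mpr (le_trans (Finset.card_le_card Finset.sdiff_subset) U.2.le)
  set U0 : {s : Finset (Fin n) // s.card = k} :=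
    ⟨(Finset.range k).attachFin (n := n) (fun m hm => by have := Finset.mem_range.mp hm; omega),
      by rw [Finset.card_attachFin, Finset.card_range]⟩ with hU0
  set W0 : {s : Finset (Fin n) // s.card = k} :=
    ⟨(Finset.Ico k (2 * k)).attachFin (n := n)
        (fun m hm => by have := Finset.mem_Ico.mp hm; omega),
      by rw [Finset.card_attachFin, Nat.card_Ico]; omega⟩ with hW0
  have hdist : (johnsonGraph n k).dist U0 W0 = k := by
    rw [dist_eq hk]
    have hset : U0.1 \ W0.1 = U0.1 := by
      ext a
      simp only [hU0, hW0, Finset.mem_sdiff, Finset.mem_attachFin, Finset.mem_range,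
        Finset.mem_Ico]
      omega
    rw [hset, U0.2]
  have hne : (johnsonGraph n k).edist U0 W0 ≠ ⊤ :=
    SimpleGraph.edist_ne_top_iff_reachable.mpr (jreach hk U0 W0)
  have hcoe : (((johnsonGraph n k).dist U0 W0 : ℕ∞)) = (johnsonGraph n k).edist U0 W0 :=
    ENat.coe_toNat hne
  have hedist : (johnsonGraph n k).edist U0 W0 = (k : ℕ∞) := by
    rw [← hcoe, hdist]
  have hge : (k : ℕ∞) ≤ (johnsonGraph n k).ediam := hedist ▸ SimpleGraph.edist_le_ediam
  have hED : (johnsonGraph n k).ediam = (k : ℕ∞) := le_antisymm hle hge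
  rw [SimpleGraph.diam, hED]
  simp

lemma attachFin_inter (s t : Finset ℕ) (hs : ∀ m ∈ s, m < n) (ht : ∀ m ∈ t, m < n) :
    s.attachFin hs ∩ t.attachFin ht
      = (s ∩ t).attachFin (fun m hm => hs m (Finset.mem_inter.mp hm).1) := by
  ext a
  simp [Finset.mem_attachFin, Finset.mem_inter]

end JohnsonProof

open JohnsonProof in
/-- For `2 ≤ k ≤ n - k`, the Johnson graph `J(n,k)` has diameter
`k` and is geodesic transitive, but its automorphism group is not transitive on the
set of `2`-arcs. -/
theorem johnson_geodesic_transitive_not_two_arc (n k : ℕ) (hk : 2 ≤ k) (hkn : k ≤ n - k) :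
    (johnsonGraph n k).diam = k ∧
    (johnsonGraph n k).GeodesicTransitiveOn (johnsonGraph n k).autGroup k ∧
    ¬ ∀ u₀ u₁ u₂ v₀ v₁ v₂ : {s : Finset (Fin n) // s.card = k},
        ((johnsonGraph n k).Adj u₀ u₁ ∧ (johnsonGraph n k).Adj u₁ u₂ ∧ u₀ ≠ u₂) →
        ((johnsonGraph n k).Adj v₀ v₁ ∧ (johnsonGraph n k).Adj v₁ v₂ ∧ v₀ ≠ v₂) →
        ∃ g ∈ (johnsonGraph n k).autGroup, g u₀ = v₀ ∧ g u₁ = v₁ ∧ g u₂ = v₂ := by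
  have hk1 : 1 ≤ k := by omega
  have h2k : 2 * k ≤ n := by omega
  have hkn' : k ≤ n := by omega
  refine ⟨jdiam hk1 h2k, ⟨?_, ?_⟩, ?_⟩
  · -- vertex transitivity
    intro U W
    obtain ⟨σ, hσ⟩ := exists_perm_image U.1 W.1 (by rw [U.2, W.2])
    exact ⟨liftPerm n k σ, liftPerm_mem_aut σ, Subtype.ext (by rw [liftPerm_apply, hσ])⟩
  · -- geodesic transitivity
    intro i _ hik
    constructor
    · obtain ⟨u, h1, h2⟩ := exists_geodesic hk1 h2k hik
      exact ⟨u, h1, h2⟩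
    · intro u w hu hw
      obtain ⟨σ, hσ⟩ := geo_trans hk1 hkn' i u w hu.1 hu.2 hw.1 hw.2
      exact ⟨liftPerm n k σ, liftPerm_mem_aut σ,
        fun j => Subtype.ext (by rw [liftPerm_apply, hσ j])⟩
  · -- not 2-arc transitive
    intro H
    set A0 : {s : Finset (Fin n) // s.card = k} :=
      ⟨(Finset.range k).attachFin (n := n) (fun m hm => by
          have := Finset.mem_range.mp hm; omega),
        by rw [Finset.card_attachFin, Finset.card_range]⟩ with hA0
    set A1 : {s : Finset (Fin n) // s.card = k} :=
      ⟨(Finset.Ico 1 (k + 1)).attachFin (n := n) (fun m hm => by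
          have := Finset.mem_Ico.mp hm; omega),
        by rw [Finset.card_attachFin, Nat.card_Ico]; omega⟩ with hA1
    set A2u : {s : Finset (Fin n) // s.card = k} :=
      ⟨(insert k ((Finset.range k).erase 1)).attachFin (n := n) (fun m hm => by
          rcases Finset.mem_insert.mp hm with h | h
          · omega
          · have := Finset.mem_range.mp (Finset.mem_of_mem_erase h); omega),
        by
          rw [Finset.card_attachFin,
            Finset.card_insert_of_notMem (fun h => by
              have := Finset.mem_range.mp (Finset.mem_of_mem_erase h); omega),
            Finset.card_erase_of_mem (Finset.mem_range.mpr (by omega)), Finset.card_range]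
          omega⟩ with hA2u
    set A2v : {s : Finset (Fin n) // s.card = k} :=
      ⟨(Finset.Ico 2 (k + 2)).attachFin (n := n) (fun m hm => by
          have := Finset.mem_Ico.mp hm; omega),
        by rw [Finset.card_attachFin, Nat.card_Ico]; omega⟩ with hA2v
    have hmemA0 : ∀ a : Fin n, a ∈ A0.1 ↔ a.val < k := by
      intro a; simp [hA0, Finset.mem_attachFin]
    have hmemA1 : ∀ a : Fin n, a ∈ A1.1 ↔ 1 ≤ a.val ∧ a.val < k + 1 := by
      intro a; simp [hA1, Finset.mem_attachFin]
    have hmemA2u : ∀ a : Fin n, a ∈ A2u.1 ↔ (a.val = k ∨ (a.val ≠ 1 ∧ a.val < k)) := by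
      intro a; simp [hA2u, Finset.mem_attachFin]
    have hmemA2v : ∀ a : Fin n, a ∈ A2v.1 ↔ 2 ≤ a.val ∧ a.val < k + 2 := by
      intro a; simp [hA2v, Finset.mem_attachFin]
    have hC : ∀ (S T : {s : Finset (Fin n) // s.card = k}) (R : Finset ℕ)
        (hR : ∀ m ∈ R, m < n), (∀ a : Fin n, a ∈ S.1 ∩ T.1 ↔ a.val ∈ R) →
        (S.1 ∩ T.1).card = R.card := by
      intro S T R hR h
      rw [show S.1 ∩ T.1 = R.attachFin hR from
        Finset.ext (fun a => by rw [h a, Finset.mem_attachFin])]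
      exact Finset.card_attachFin R hR
    have h0n : 0 < n := by omega
    have h1n : 1 < n := by omega
    have hknn : k < n := by omega
    have v0 : ((⟨0, h0n⟩ : Fin n)).val = 0 := rfl
    have v1 : ((⟨1, h1n⟩ : Fin n)).val = 1 := rfl
    have vk : ((⟨k, hknn⟩ : Fin n)).val = k := rfl
    -- adjacency A0 A1
    have adj01 : (johnsonGraph n k).Adj A0 A1 := by
      refine ⟨?_, ?_⟩
      · intro h
        have hm : (⟨0, h0n⟩ : Fin n) ∈ A0.1 := (hmemA0 _).mpr (by omega)
        rw [h, hmemA1] at hm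
        omega
      · rw [hC A0 A1 (Finset.Ico 1 k) (fun m hm => by have := Finset.mem_Ico.mp hm; omega)
          (fun a => by rw [Finset.mem_inter, hmemA0 a, hmemA1 a, Finset.mem_Ico]; omega),
          Nat.card_Ico]
    have adj12u : (johnsonGraph n k).Adj A1 A2u := by
      refine ⟨?_, ?_⟩
      · intro h
        have hm : (⟨1, h1n⟩ : Fin n) ∈ A1.1 := (hmemA1 _).mpr (by omega)
        rw [h, hmemA2u] at hm
        omega
      · rw [hC A1 A2u (Finset.Ico 2 (k + 1)) (fun m hm => by have := Finset.mem_Ico.mp hm; omega)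
          (fun a => by rw [Finset.mem_inter, hmemA1 a, hmemA2u a, Finset.mem_Ico]; omega),
          Nat.card_Ico]
        omega
    have adj12v : (johnsonGraph n k).Adj A1 A2v := by
      refine ⟨?_, ?_⟩
      · intro h
        have hm : (⟨1, h1n⟩ : Fin n) ∈ A1.1 := (hmemA1 _).mpr (by omega)
        rw [h, hmemA2v] at hm
        omega
      · rw [hC A1 A2v (Finset.Ico 2 (k + 1)) (fun m hm => by have := Finset.mem_Ico.mp hm; omega)
          (fun a => by rw [Finset.mem_inter, hmemA1 a, hmemA2v a, Finset.mem_Ico]; omega),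
          Nat.card_Ico]
        omega
    have adj02u : (johnsonGraph n k).Adj A0 A2u := by
      refine ⟨?_, ?_⟩
      · intro h
        have hm : (⟨k, hknn⟩ : Fin n) ∈ A2u.1 := (hmemA2u _).mpr (by omega)
        rw [← h, hmemA0] at hm
        omega
      · rw [hC A0 A2u ((Finset.range k).erase 1) (fun m hm => by
            have := Finset.mem_range.mp (Finset.mem_of_mem_erase hm); omega)
          (fun a => by
            rw [Finset.mem_inter, hmemA0 a, hmemA2u a, Finset.mem_erase, Finset.mem_range]
            omega),
          Finset.card_erase_of_mem (Finset.mem_range.mpr (by omega)), Finset.card_range]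
    have ne02u : A0 ≠ A2u := adj02u.1
    have ne02v : A0 ≠ A2v := by
      intro h
      have hm : (⟨0, h0n⟩ : Fin n) ∈ A0.1 := (hmemA0 _).mpr (by omega)
      rw [h, hmemA2v] at hm
      omega
    have card02v : (A0.1 ∩ A2v.1).card = k - 2 := by
      rw [hC A0 A2v (Finset.Ico 2 k) (fun m hm => by have := Finset.mem_Ico.mp hm; omega)
        (fun a => by rw [Finset.mem_inter, hmemA0 a, hmemA2v a, Finset.mem_Ico]; omega),
        Nat.card_Ico]
    obtain ⟨g, hg, hg0, hg1, hg2⟩ :=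
      H A0 A1 A2u A0 A1 A2v ⟨adj01, adj12u, ne02u⟩ ⟨adj01, adj12v, ne02v⟩
    have hiff := hg A0 A2u
    rw [hg0, hg2] at hiff
    have hadj02v : (johnsonGraph n k).Adj A0 A2v := hiff.mpr adj02u
    have hcard02v : (A0.1 ∩ A2v.1).card = k - 1 := hadj02v.2
    omega
end
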